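/- arXiv:2307.02373 — 12 statements merged into one kernel-verified Lean document; each statement's English description precedes it below -/
import Mathlib

section
/- For any connected graph G, the strong metric dimension of G equals the vertex cover number of its strong resolving graph G_SR. -/
open SimpleGraph

variable {V : Type*} {W : Type*}

/-- `x` lies on some `y`–`z` geodesic in `G`. -/
def LiesOnGeodesic (G : SimpleGraph V) (x y z : V) : Prop :=
  G.dist y x + G.dist x z = G.dist y z

/-- A strong resolving set of `G`. -/
def IsStrongResolvingSet (G : SimpleGraph V) (S : Set V) : Prop :=
  ∀ x y : V, x ≠ y → ∃ z ∈ S,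
    LiesOnGeodesic G x y z ∨ LiesOnGeodesic G y x z

/-- The strong metric dimension of a finite graph. -/
noncomputable def sdim (G : SimpleGraph V) [Fintype V] : ℕ :=
  sInf {n : ℕ | ∃ S : Finset V, S.card = n ∧ IsStrongResolvingSet G ↑S}

/-- `u` is maximally distant from `v` in `G`. -/
def MaxDistFrom (G : SimpleGraph V) (u v : V) : Prop :=
  ∀ w : V, G.Adj u w → G.dist w v ≤ G.dist u v

/-- `u` and `v` are mutually maximally distant in `G`. -/
def MutMaxDist (G : SimpleGraph V) (u v : V) : Prop :=
  MaxDistFrom G u v ∧ MaxDistFrom G v u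

/-- The strong resolving graph of `G` (on the full vertex set; vertices not in
any MMD pair are isolated). -/
def srGraph (G : SimpleGraph V) : SimpleGraph V where
  Adj u v := u ≠ v ∧ MutMaxDist G u v
  symm := by
    constructor
    rintro u v ⟨h, h1, h2⟩
    exact ⟨h.symm, h2, h1⟩
  loopless := by constructor; rintro v ⟨h, -⟩; exact h rfl

/-- A vertex cover of `H`. -/
def IsVertexCover (H : SimpleGraph V) (C : Set V) : Prop :=
  ∀ u v : V, H.Adj u v → u ∈ C ∨ v ∈ C

/-- The vertex cover number of a finite graph. -/
noncomputable def vcNum (H : SimpleGraph V) [Fintype V] : ℕ :=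
  sInf {n : ℕ | ∃ C : Finset V, C.card = n ∧ _root_.IsVertexCover H ↑C}

/-- In a connected graph, from `u ≠ z` there is a neighbor of `u` one step closer to `z`. -/
lemma exists_adj_dist_sub_one {G : SimpleGraph V} (hG : G.Connected)
    {u z : V} (h : u ≠ z) : ∃ w, G.Adj u w ∧ G.dist w z + 1 = G.dist u z := by
  obtain ⟨p, hp⟩ := hG.exists_walk_length_eq_dist u z
  cases p with
  | nil => exact absurd rfl h
  | @cons _ b _ hadj q =>
    refine ⟨b, hadj, ?_⟩
    rw [SimpleGraph.Walk.length_cons] at hp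
    have h1 : G.dist b z ≤ q.length := SimpleGraph.dist_le q
    have h2 : G.dist u z ≤ G.dist u b + G.dist b z := hG.dist_triangle
    have h3 : G.dist u b = 1 := SimpleGraph.dist_eq_one_iff_adj.mpr hadj
    omega

/-- If `u` is maximally distant from `v` and `u` lies on a `v`–`z` geodesic, then `z = u`. -/
lemma eq_of_maxDist_liesOn {G : SimpleGraph V} (hG : G.Connected)
    {u v z : V} (hm : MaxDistFrom G u v) (hl : LiesOnGeodesic G u v z) : z = u := by
  by_contra hne
  obtain ⟨w, hadj, hw⟩ := exists_adj_dist_sub_one hG (fun h => hne h.symm)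
  have h1 : G.dist v z ≤ G.dist v w + G.dist w z := hG.dist_triangle
  have h2 : G.dist w v ≤ G.dist u v := hm w hadj
  have h3 : G.dist v w = G.dist w v := SimpleGraph.dist_comm
  have h4 : G.dist v u = G.dist u v := SimpleGraph.dist_comm
  unfold LiesOnGeodesic at hl
  omega

lemma srs_vc {G : SimpleGraph V} (hG : G.Connected) {S : Set V}
    (hS : IsStrongResolvingSet G S) : _root_.IsVertexCover (srGraph G) S := by
  rintro u v ⟨hne, hmu, hmv⟩
  obtain ⟨z, hz, hcase⟩ := hS u v hne
  rcases hcase with h | h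
  · left; rwa [eq_of_maxDist_liesOn hG hmu h] at hz
  · right; rwa [eq_of_maxDist_liesOn hG hmv h] at hz

lemma vc_srs [Fintype V] {G : SimpleGraph V} (hG : G.Connected) {C : Set V}
    (hC : _root_.IsVertexCover (srGraph G) C) : IsStrongResolvingSet G C := by
  classical
  intro x y hxy
  -- Step 1: pick u maximizing dist to y among vertices with x on a y–u geodesic.
  have hxA : LiesOnGeodesic G x y x := by
    unfold LiesOnGeodesic; rw [SimpleGraph.dist_self]; omega
  obtain ⟨u, huA, humax⟩ := Finset.exists_max_image
    (Finset.univ.filter (fun u => LiesOnGeodesic G x y u)) (fun u => G.dist u y)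
    ⟨x, by simp [hxA]⟩
  rw [Finset.mem_filter] at huA
  have hu : LiesOnGeodesic G x y u := huA.2
  have humax' : ∀ w, LiesOnGeodesic G x y w → G.dist w y ≤ G.dist u y := by
    intro w hw; exact humax w (by simp [hw])
  -- u is maximally distant from y
  have hmuy : MaxDistFrom G u y := by
    intro w hadj
    by_contra hlt
    push_neg at hlt
    have h1 : G.dist w y ≤ G.dist w u + G.dist u y := hG.dist_triangle
    have h2 : G.dist w u = 1 := SimpleGraph.dist_eq_one_iff_adj.mpr hadj.symm
    have hwy : G.dist w y = G.dist u y + 1 := by omega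
    have hwA : LiesOnGeodesic G x y w := by
      unfold LiesOnGeodesic at hu ⊢
      have h3 : G.dist y w ≤ G.dist y x + G.dist x w := hG.dist_triangle
      have h4 : G.dist x w ≤ G.dist x u + G.dist u w := hG.dist_triangle
      have h5 : G.dist u w = 1 := SimpleGraph.dist_eq_one_iff_adj.mpr hadj
      have h6 : G.dist y w = G.dist w y := SimpleGraph.dist_comm
      have h7 : G.dist y u = G.dist u y := SimpleGraph.dist_comm
      omega
    have := humax' w hwA
    omega
  -- Step 2: pick v maximizing dist from u among vertices with y on a u–v geodesic.
  have hyB : LiesOnGeodesic G y u y := by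
    unfold LiesOnGeodesic; rw [SimpleGraph.dist_self]; omega
  obtain ⟨v, hvB, hvmax⟩ := Finset.exists_max_image
    (Finset.univ.filter (fun v => LiesOnGeodesic G y u v)) (fun v => G.dist u v)
    ⟨y, by simp [hyB]⟩
  rw [Finset.mem_filter] at hvB
  have hv : LiesOnGeodesic G y u v := hvB.2
  have hvmax' : ∀ w, LiesOnGeodesic G y u w → G.dist u w ≤ G.dist u v := by
    intro w hw; exact hvmax w (by simp [hw])
  -- v is maximally distant from u
  have hmvu : MaxDistFrom G v u := by
    intro w hadj
    by_contra hlt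
    push_neg at hlt
    have h1 : G.dist w u ≤ G.dist w v + G.dist v u := hG.dist_triangle
    have h2 : G.dist w v = 1 := SimpleGraph.dist_eq_one_iff_adj.mpr hadj.symm
    have h6 : G.dist u w = G.dist w u := SimpleGraph.dist_comm
    have h7 : G.dist u v = G.dist v u := SimpleGraph.dist_comm
    have hwB : LiesOnGeodesic G y u w := by
      unfold LiesOnGeodesic at hv ⊢
      have h3 : G.dist u w ≤ G.dist u y + G.dist y w := hG.dist_triangle
      have h4 : G.dist y w ≤ G.dist y v + G.dist v w := hG.dist_triangle
      have h5 : G.dist v w = 1 := SimpleGraph.dist_eq_one_iff_adj.mpr hadj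
      omega
    have := hvmax' w hwB
    omega
  -- u is maximally distant from v
  have hmuv : MaxDistFrom G u v := by
    intro w hadj
    have h1 : G.dist w v ≤ G.dist w y + G.dist y v := hG.dist_triangle
    have h2 : G.dist w y ≤ G.dist u y := hmuy w hadj
    unfold LiesOnGeodesic at hv
    omega
  -- u ≠ v
  have hxy0 : 0 < G.dist x y := hG.pos_dist_of_ne hxy
  have hxyc : G.dist x y = G.dist y x := SimpleGraph.dist_comm
  have huy : G.dist x y ≤ G.dist u y := by
    have := humax' x hxA
    have : G.dist x y = G.dist x y := rfl
    calc G.dist x y = G.dist x y := rfl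
      _ ≤ G.dist u y := by have h := humax' x hxA; omega
  have huv0 : 0 < G.dist u v := by
    unfold LiesOnGeodesic at hv
    omega
  have hunev : u ≠ v := by
    intro h; rw [h, SimpleGraph.dist_self] at huv0; omega
  -- conclude
  rcases hC u v ⟨hunev, hmuv, hmvu⟩ with h | h
  · exact ⟨u, h, Or.inl hu⟩
  · refine ⟨v, h, Or.inr ?_⟩
    unfold LiesOnGeodesic at hu hv ⊢
    have h1 : G.dist x v ≤ G.dist x y + G.dist y v := hG.dist_triangle
    have h2 : G.dist u v ≤ G.dist u x + G.dist x v := hG.dist_triangle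
    have h3 : G.dist u x = G.dist x u := SimpleGraph.dist_comm
    have h4 : G.dist y u = G.dist u y := SimpleGraph.dist_comm
    omega

theorem sdim_eq_vcNum_srGraph [Fintype V] (G : SimpleGraph V) (hG : G.Connected) :
    sdim G = vcNum (srGraph G) := by
  unfold sdim vcNum
  congr 1
  ext n
  constructor <;> rintro ⟨S, h1, h2⟩
  · exact ⟨S, h1, srs_vc hG h2⟩
  · exact ⟨S, h1, vc_srs hG h2⟩
end

section
/- If x and y are mutually maximally distant vertices in a connected graph G, then every strong resolving set S of G satisfies S ∩ {x,y} ≠ ∅. -/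
open SimpleGraph

variable {V : Type*} {W : Type*}

lemma key_endpoint_of_geodesic (G : SimpleGraph V) (hG : G.Connected) {x y z : V}
    (hmd : MaxDistFrom G x y) (h : G.dist y x + G.dist x z = G.dist y z) : z = x := by
  by_contra hne
  have hpos : 0 < G.dist x z := hG.pos_dist_of_ne (Ne.symm hne)
  obtain ⟨p, hp⟩ := hG.exists_walk_length_eq_dist x z
  cases p with
  | nil => simp at hp; omega
  | cons hadj q =>
    rename_i w
    have hq : G.dist w z ≤ q.length := SimpleGraph.dist_le q
    have hw : G.dist y w ≤ G.dist y x := by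
      rw [SimpleGraph.dist_comm (u:=y) (v:=w), SimpleGraph.dist_comm (u:=y) (v:=x)]
      exact hmd w hadj
    have htri : G.dist y z ≤ G.dist y w + G.dist w z := hG.dist_triangle
    simp [SimpleGraph.Walk.length_cons] at hp
    omega

theorem strongResolvingSet_inter_mmd_pair [Fintype V] (G : SimpleGraph V)
    (hG : G.Connected) (x y : V) (hxy : x ≠ y) (hmmd : MutMaxDist G x y)
    (S : Set V) (hS : IsStrongResolvingSet G S) :
    x ∈ S ∨ y ∈ S := by
  obtain ⟨z, hzS, hcase⟩ := hS x y hxy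
  rcases hcase with h | h
  · left; rwa [key_endpoint_of_geodesic G hG hmmd.1 h] at hzS
  · right; rwa [key_endpoint_of_geodesic G hG hmmd.2 h] at hzS
end

section
/- If u and w are distinct vertices of a connected graph G lying in the same twin equivalence class (i.e., N(u) \ {w} = N(w) \ {u}), then every strong resolving set S of G satisfies S ∩ {u,w} ≠ ∅. -/
open SimpleGraph

variable {V : Type*} {W : Type*}

lemma twin_dist_le {V : Type*} (G : SimpleGraph V) (hG : G.Connected) (u w : V)
    (htwin : G.neighborSet u \ {w} = G.neighborSet w \ {u})
    (x : V) (hx : x ≠ u) : G.dist w x ≤ G.dist u x := by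
  obtain ⟨p, hp⟩ := hG.exists_walk_length_eq_dist u x
  cases p with
  | nil => exact absurd rfl hx.symm
  | cons h q =>
    rename_i y
    by_cases hyw : y = w
    · subst hyw
      calc G.dist y x ≤ q.length := SimpleGraph.dist_le q
        _ ≤ (SimpleGraph.Walk.cons h q).length := by simp [SimpleGraph.Walk.length_cons]
        _ = G.dist u x := hp
    · have hy : y ∈ G.neighborSet w \ {u} := by
        rw [← htwin]
        exact ⟨h, hyw⟩
      have : G.Adj w y := hy.1
      calc G.dist w x ≤ (SimpleGraph.Walk.cons this q).length := SimpleGraph.dist_le _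
        _ = (SimpleGraph.Walk.cons h q).length := by simp [SimpleGraph.Walk.length_cons]
        _ = G.dist u x := hp

lemma twin_dist_eq {V : Type*} (G : SimpleGraph V) (hG : G.Connected) (u w : V)
    (htwin : G.neighborSet u \ {w} = G.neighborSet w \ {u})
    (x : V) (hxu : x ≠ u) (hxw : x ≠ w) : G.dist u x = G.dist w x := by
  have h1 := twin_dist_le G hG u w htwin x hxu
  have h2 := twin_dist_le G hG w u (by rw [htwin]) x hxw
  omega

theorem strongResolvingSet_inter_twins [Fintype V] (G : SimpleGraph V)
    (hG : G.Connected) (u w : V) (huw : u ≠ w)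
    (htwin : G.neighborSet u \ {w} = G.neighborSet w \ {u})
    (S : Set V) (hS : IsStrongResolvingSet G S) :
    u ∈ S ∨ w ∈ S := by
  obtain ⟨z, hzS, hgeo⟩ := hS u w huw
  by_cases hzu : z = u
  · exact Or.inl (hzu ▸ hzS)
  by_cases hzw : z = w
  · exact Or.inr (hzw ▸ hzS)
  exfalso
  have hd : G.dist u z = G.dist w z :=
    twin_dist_eq G hG u w htwin z hzu hzw
  have hpos : 0 < G.dist u w := hG.pos_dist_of_ne huw
  have hcomm : G.dist u w = G.dist w u := SimpleGraph.dist_comm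
  rcases hgeo with h | h <;> unfold LiesOnGeodesic at h <;> omega
end

section
/- For a connected graph G on n ≥ 2 vertices, sdim(G) = 1 if and only if G is a path. -/
open SimpleGraph

variable {V : Type*} {W : Type*}

lemma iso_dist_le {G : SimpleGraph V} {H : SimpleGraph W} (e : G ≃g H) (x y : V) :
    H.dist (e x) (e y) ≤ G.dist x y := by
  by_cases hr : G.Reachable x y
  · obtain ⟨p, hp⟩ := hr.exists_walk_length_eq_dist
    calc H.dist (e x) (e y) ≤ (p.map e.toHom).length := SimpleGraph.dist_le _
      _ = G.dist x y := by rw [SimpleGraph.Walk.length_map, hp]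
  · have hH : ¬ H.Reachable (e x) (e y) := fun h => hr (by simpa using h.map e.symm.toHom)
    rw [SimpleGraph.dist_eq_zero_of_not_reachable hH,
      SimpleGraph.dist_eq_zero_of_not_reachable hr]

lemma iso_dist_eq {G : SimpleGraph V} {H : SimpleGraph W} (e : G ≃g H) (x y : V) :
    H.dist (e x) (e y) = G.dist x y := by
  refine le_antisymm (iso_dist_le e x y) ?_
  have := iso_dist_le e.symm (e x) (e y)
  simpa using this

lemma pathGraph_walk_bound {n : ℕ} {i j : Fin n} (p : (pathGraph n).Walk i j) :
    (j.val : ℤ) - i.val ≤ p.length ∧ (i.val : ℤ) - j.val ≤ p.length := by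
  induction p with
  | nil => simp
  | @cons a b c h p ih =>
    rw [pathGraph_adj] at h
    obtain ⟨ih1, ih2⟩ := ih
    simp only [SimpleGraph.Walk.length_cons]
    push_cast at *
    omega

lemma pathGraph_connected' {n : ℕ} (i : Fin n) : (pathGraph n).Connected := by
  cases n with
  | zero => exact absurd i.isLt (by omega)
  | succ m => exact pathGraph_connected m

lemma pathGraph_dist_le {n : ℕ} (k : ℕ) (i j : Fin n) (h : j.val = i.val + k) :
    (pathGraph n).dist i j ≤ k := by
  induction k generalizing i with
  | zero =>
    have : i = j := Fin.ext (by omega)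
    simp [this]
  | succ m ih =>
    have hi' : i.val + 1 < n := by have := j.isLt; omega
    set i' : Fin n := ⟨i.val + 1, hi'⟩ with hi'def
    have hadj : (pathGraph n).Adj i i' := by rw [pathGraph_adj]; left; rfl
    have h1 : (pathGraph n).dist i i' = 1 := SimpleGraph.dist_eq_one_iff_adj.mpr hadj
    have h2 : (pathGraph n).dist i' j ≤ m := ih i' (by simp [hi'def]; omega)
    calc (pathGraph n).dist i j ≤ (pathGraph n).dist i i' + (pathGraph n).dist i' j :=
          (pathGraph_connected' i).dist_triangle
      _ ≤ 1 + m := by omega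
      _ = m + 1 := by omega

lemma pathGraph_dist {n : ℕ} (i j : Fin n) (h : i.val ≤ j.val) :
    (pathGraph n).dist i j = j.val - i.val := by
  refine le_antisymm (pathGraph_dist_le _ i j (by omega)) ?_
  obtain ⟨p, hp⟩ := ((pathGraph_connected' i) i j).exists_walk_length_eq_dist
  have := (pathGraph_walk_bound p).1
  omega

theorem sdim_eq_one_iff_path [Fintype V] (G : SimpleGraph V) (hG : G.Connected)
    (hn : 2 ≤ Fintype.card V) :
    sdim G = 1 ↔ Nonempty (G ≃g pathGraph (Fintype.card V)) := by
  classical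
  constructor
  · intro h
    have hne : {n : ℕ | ∃ S : Finset V, S.card = n ∧ IsStrongResolvingSet G ↑S}.Nonempty := by
      by_contra hc
      rw [Set.not_nonempty_iff_eq_empty] at hc
      rw [sdim, hc, Nat.sInf_empty] at h
      exact absurd h (by norm_num)
    have hmem := Nat.sInf_mem hne
    rw [← sdim, h] at hmem
    obtain ⟨S, hS1, hSR⟩ := hmem
    obtain ⟨w, rfl⟩ := Finset.card_eq_one.mp hS1
    have key : ∀ x y : V, x ≠ y →
        G.dist x w + G.dist x y = G.dist y w ∨ G.dist y w + G.dist x y = G.dist x w := by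
      intro x y hxy
      obtain ⟨z, hz, hg⟩ := hSR x y hxy
      simp only [Finset.coe_singleton, Set.mem_singleton_iff] at hz
      subst hz
      rcases hg with hg | hg
      · left; unfold LiesOnGeodesic at hg
        rw [SimpleGraph.dist_comm (u := y) (v := x)] at hg; omega
      · right; unfold LiesOnGeodesic at hg
        omega
    have hpos : ∀ x y : V, x ≠ y → 0 < G.dist x y := by
      intro x y hxy
      exact Nat.pos_of_ne_zero fun h0 => hxy (hG.dist_eq_zero_iff.mp h0)
    have hlt : ∀ x : V, G.dist x w < Fintype.card V := by
      intro x
      obtain ⟨p, hp⟩ := (hG x w).exists_walk_length_eq_dist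
      calc G.dist x w ≤ p.bypass.length := SimpleGraph.dist_le _
        _ < Fintype.card V := p.bypass_isPath.length_lt
    set f : V → Fin (Fintype.card V) := fun x => ⟨G.dist x w, hlt x⟩ with hf
    have hinj : Function.Injective f := by
      intro x y hxy
      by_contra hne'
      have hd : G.dist x w = G.dist y w := by
        have := congrArg Fin.val hxy; simpa [hf] using this
      rcases key x y hne' with hk | hk <;>
        · have := hpos x y hne'; omega
    have hbij : Function.Bijective f :=
      (Fintype.bijective_iff_injective_and_card f).mpr ⟨hinj, by simp⟩
    refine ⟨⟨Equiv.ofBijective f hbij, ?_⟩⟩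
    intro x y
    rw [pathGraph_adj]
    show G.dist x w + 1 = G.dist y w ∨ G.dist y w + 1 = G.dist x w ↔ G.Adj x y
    constructor
    · intro hpa
      have hne' : x ≠ y := by
        rintro rfl
        rcases hpa with h1 | h1 <;> omega
      rcases key x y hne' with hk | hk <;> rcases hpa with hp1 | hp1 <;>
        exact SimpleGraph.dist_eq_one_iff_adj.mp (by omega)
    · intro hadj
      have hd1 : G.dist x y = 1 := SimpleGraph.dist_eq_one_iff_adj.mpr hadj
      rcases key x y hadj.ne with hk | hk
      · left; omega
      · right; omega
  · rintro ⟨e⟩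
    have hn0 : 0 < Fintype.card V := by omega
    set v0 : V := e.symm ⟨0, hn0⟩ with hv0
    have hd0 : ∀ x : V, G.dist x v0 = (e x).val := by
      intro x
      have h1 : (pathGraph (Fintype.card V)).dist (e x) (e v0) = G.dist x v0 :=
        iso_dist_eq e x v0
      have h2 : e v0 = ⟨0, hn0⟩ := by rw [hv0]; exact e.apply_symm_apply _
      rw [← h1, h2, SimpleGraph.dist_comm (u := e x)]
      rw [pathGraph_dist ⟨0, hn0⟩ (e x) (by simp)]
      simp
    have h1 : 1 ∈ {k : ℕ | ∃ S : Finset V, S.card = k ∧ IsStrongResolvingSet G ↑S} := by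
      refine ⟨{v0}, Finset.card_singleton _, ?_⟩
      intro x y hxy
      refine ⟨v0, by simp, ?_⟩
      have hxy' : (e x).val ≠ (e y).val := by
        intro hc
        exact hxy (e.injective (Fin.ext hc))
      have hdxy : G.dist x y = (pathGraph (Fintype.card V)).dist (e x) (e y) :=
        (iso_dist_eq e x y).symm
      rcases Nat.lt_or_ge (e x).val (e y).val with hlt | hge
      · left
        unfold LiesOnGeodesic
        rw [SimpleGraph.dist_comm (u := y) (v := x), hd0 x, hd0 y, hdxy,
          pathGraph_dist (e x) (e y) (le_of_lt hlt)]
        omega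
      · right
        unfold LiesOnGeodesic
        rw [hd0 x, hd0 y, hdxy,
          SimpleGraph.dist_comm (u := e x) (v := e y),
          pathGraph_dist (e y) (e x) hge]
        omega
    have h0 : 0 ∉ {k : ℕ | ∃ S : Finset V, S.card = k ∧ IsStrongResolvingSet G ↑S} := by
      rintro ⟨S, hS0, hSR⟩
      rw [Finset.card_eq_zero] at hS0
      subst hS0
      obtain ⟨x, y, hxy⟩ := Fintype.exists_pair_of_one_lt_card (α := V) (by omega)
      obtain ⟨z, hz, -⟩ := hSR x y hxy
      simp at hz
    have hle : sdim G ≤ 1 := Nat.sInf_le h1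
    have hmem := Nat.sInf_mem (⟨1, h1⟩ :
      Set.Nonempty {k : ℕ | ∃ S : Finset V, S.card = k ∧ IsStrongResolvingSet G ↑S})
    rw [← sdim] at hmem
    have hne0 : sdim G ≠ 0 := fun hc => h0 (hc ▸ hmem)
    omega
end

section
/- For a connected graph G on n ≥ 2 vertices, sdim(G) = n−1 if and only if G is the complete graph K_n. -/
open SimpleGraph

variable {V : Type*} {W : Type*}

lemma lies_self (G : SimpleGraph V) (x y : V) : LiesOnGeodesic G x y x := by
  simp [LiesOnGeodesic, SimpleGraph.dist_self]

lemma exists_dist_two (G : SimpleGraph V) (hc : G.Connected)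
    (h : ∃ u v : V, u ≠ v ∧ ¬ G.Adj u v) :
    ∃ u w v : V, G.Adj u w ∧ G.Adj w v ∧ G.dist u v = 2 := by
  obtain ⟨u, v, hne, hna⟩ := h
  have hd : 2 ≤ G.dist u v := by
    have h0 : G.dist u v ≠ 0 := (hc.pos_dist_of_ne hne).ne'
    have h1 : G.dist u v ≠ 1 := fun h => hna (SimpleGraph.dist_eq_one_iff_adj.mp h)
    omega
  clear hne hna
  obtain ⟨d, hdv⟩ : ∃ d, G.dist u v = d := ⟨_, rfl⟩
  rw [hdv] at hd
  induction d using Nat.strong_induction_on generalizing u v with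
  | _ d ih =>
    obtain ⟨p, hp⟩ := (hc u v).exists_walk_length_eq_dist
    rw [hdv] at hp
    cases p with
    | nil => simp at hp; omega
    | cons hadj q =>
      rename_i w
      simp [SimpleGraph.Walk.length_cons] at hp
      have hq : q.length = d - 1 := by omega
      rcases eq_or_lt_of_le hd with h2 | h3
      · -- d = 2, q has length 1
        have hq1 : q.length = 1 := by omega
        have hav : G.Adj w v := by
          have := q.adj_getVert_succ (i := 0) (by omega)
          rw [SimpleGraph.Walk.getVert_zero] at this
          have h2' : q.getVert 1 = v := by rw [← hq1]; exact q.getVert_length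
          rwa [h2'] at this
        exact ⟨u, w, v, hadj, hav, by omega⟩
      · -- d ≥ 3
        have hle : G.dist w v ≤ d - 1 := hq ▸ SimpleGraph.dist_le q
        have hge : d - 1 ≤ G.dist w v := by
          have ht := hc.dist_triangle (u := u) (v := w) (w := v)
          have h1 : G.dist u w = 1 := SimpleGraph.dist_eq_one_iff_adj.mpr hadj
          omega
        exact ih (d - 1) (by omega) w v (by omega) (by omega)

lemma resolving_of_dist_two [Fintype V] [DecidableEq V] (G : SimpleGraph V)
    {u w v : V} (h1 : G.Adj u w) (h2 : G.Adj w v) (hd : G.dist u v = 2) :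
    IsStrongResolvingSet G ((Finset.univ \ {u, w} : Finset V) : Set V) := by
  intro x y hxy
  by_cases hx : x ∈ (Finset.univ \ {u, w} : Finset V)
  · exact ⟨x, by simpa using hx, Or.inl (lies_self G x y)⟩
  by_cases hy : y ∈ (Finset.univ \ {u, w} : Finset V)
  · exact ⟨y, by simpa using hy, Or.inr (lies_self G y x)⟩
  simp only [Finset.mem_sdiff, Finset.mem_univ, true_and, not_not, Finset.mem_insert,
    Finset.mem_singleton] at hx hy
  have hvS : v ∈ (Finset.univ \ {u, w} : Finset V) := by
    simp only [Finset.mem_sdiff, Finset.mem_univ, true_and, Finset.mem_insert,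
      Finset.mem_singleton]
    push_neg
    constructor
    · rintro rfl; simp [SimpleGraph.dist_self] at hd
    · rintro rfl; exact G.loopless.irrefl v h2
  have key : LiesOnGeodesic G w u v := by
    unfold LiesOnGeodesic
    rw [SimpleGraph.dist_eq_one_iff_adj.mpr h1, SimpleGraph.dist_eq_one_iff_adj.mpr h2, hd]
  rcases hx with rfl | rfl <;> rcases hy with rfl | rfl
  · exact absurd rfl hxy
  · exact ⟨v, by simpa using hvS, Or.inr key⟩
  · exact ⟨v, by simpa using hvS, Or.inl key⟩
  · exact absurd rfl hxy

theorem sdim_eq_card_sub_one_iff_complete [Fintype V] (G : SimpleGraph V)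
    (hG : G.Connected) (hn : 2 ≤ Fintype.card V) :
    sdim G = Fintype.card V - 1 ↔ G = (⊤ : SimpleGraph V) := by
  classical
  constructor
  · intro hs
    by_contra hne
    have hpair : ∃ u v : V, u ≠ v ∧ ¬ G.Adj u v := by
      by_contra hall
      push_neg at hall
      apply hne
      ext u v
      simp only [top_adj]
      exact ⟨fun h => h.ne, fun h => hall u v h⟩
    obtain ⟨u, w, v, h1, h2, hd⟩ := exists_dist_two G hG hpair
    have huw : u ≠ w := h1.ne
    have hcard : (Finset.univ \ {u, w} : Finset V).card = Fintype.card V - 2 := by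
      rw [Finset.card_sdiff_of_subset (Finset.subset_univ _), Finset.card_univ]
      congr 1
      rw [Finset.card_insert_of_notMem (by simp [huw]), Finset.card_singleton]
    have hle : sdim G ≤ Fintype.card V - 2 :=
      Nat.sInf_le ⟨_, hcard, resolving_of_dist_two G h1 h2 hd⟩
    omega
  · rintro rfl
    apply le_antisymm
    · obtain ⟨a⟩ : Nonempty V := Fintype.card_pos_iff.mp (by omega)
      have hres : IsStrongResolvingSet (⊤ : SimpleGraph V)
          ((Finset.univ \ {a} : Finset V) : Set V) := by
        intro x y hxy
        by_cases hx : x = a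
        · exact ⟨y, by simp [hx ▸ hxy.symm], Or.inr (lies_self _ y x)⟩
        · exact ⟨x, by simp [hx], Or.inl (lies_self _ x y)⟩
      have hcard : (Finset.univ \ {a} : Finset V).card = Fintype.card V - 1 := by
        rw [Finset.card_sdiff_of_subset (Finset.subset_univ _), Finset.card_univ, Finset.card_singleton]
      exact Nat.sInf_le ⟨_, hcard, hres⟩
    · apply le_csInf
      · exact ⟨Fintype.card V, Finset.univ, by simp,
          fun x y hxy => ⟨x, by simp, Or.inl (lies_self _ x y)⟩⟩
      · rintro m ⟨S, rfl, hres⟩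
        by_contra hlt
        push_neg at hlt
        have h2c : 1 < Sᶜ.card := by
          rw [Finset.card_compl]
          omega
        obtain ⟨x, hx, y, hy, hxy⟩ := Finset.one_lt_card.mp h2c
        obtain ⟨z, hz, hcase⟩ := hres x y hxy
        rw [Finset.mem_coe] at hz
        rw [Finset.mem_compl] at hx hy
        have hzx : z ≠ x := fun h => hx (h ▸ hz)
        have hzy : z ≠ y := fun h => hy (h ▸ hz)
        have d1 : ∀ a b : V, a ≠ b → (⊤ : SimpleGraph V).dist a b = 1 :=
          fun a b h => SimpleGraph.dist_eq_one_iff_adj.mpr (by simp [h])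
        rcases hcase with h | h <;> unfold LiesOnGeodesic at h
        · rw [d1 y x hxy.symm, d1 x z hzx.symm, d1 y z hzy.symm] at h
          omega
        · rw [d1 x y hxy, d1 y z hzy.symm, d1 x z hzx.symm] at h
          omega
end

section
/- For every m ≥ 3, the cycle C_{2m} is a subgraph of the prism P_m □ K_2, and sdim(C_{2m})/sdim(P_m □ K_2) = m/2; in particular the ratio sdim(H)/sdim(G) over pairs H ⊆ G of connected graphs is unbounded. -/
open SimpleGraph

variable {V : Type*} {W : Type*}

/-- The cycle graph on `n` vertices (`n ≥ 3`), as a graph on `Fin n`. -/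
def cycGraph (n : ℕ) : SimpleGraph (Fin n) where
  Adj i j := i ≠ j ∧ ((i.val + 1) % n = j.val ∨ (j.val + 1) % n = i.val)
  symm := by
    constructor
    rintro i j ⟨h, h'⟩
    exact ⟨h.symm, h'.symm⟩
  loopless := by constructor; rintro i ⟨h, -⟩; exact h rfl

section Aux

/-- circle distance -/
def cd (n : ℕ) (x y : Fin n) : ℕ :=
  min (max x.val y.val - min x.val y.val) (n - (max x.val y.val - min x.val y.val))

lemma cd_comm (n : ℕ) (x y : Fin n) : cd n x y = cd n y x := by
  simp [cd]; omega

lemma cd_step {n : ℕ} (hn : 2 ≤ n) {x w : Fin n} (h : (cycGraph n).Adj x w) (y : Fin n) :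
    cd n x y ≤ cd n w y + 1 := by
  obtain ⟨hne, h1 | h1⟩ := h
  · rcases Nat.lt_or_ge (x.val + 1) n with h2 | h2
    · rw [Nat.mod_eq_of_lt h2] at h1
      have := x.isLt; have := w.isLt; have := y.isLt
      simp only [cd]; omega
    · have hx : x.val + 1 = n := by have := x.isLt; omega
      rw [hx, Nat.mod_self] at h1
      have := x.isLt; have := w.isLt; have := y.isLt
      simp only [cd]; omega
  · rcases Nat.lt_or_ge (w.val + 1) n with h2 | h2
    · rw [Nat.mod_eq_of_lt h2] at h1
      have := x.isLt; have := w.isLt; have := y.isLt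
      simp only [cd]; omega
    · have hw : w.val + 1 = n := by have := w.isLt; omega
      rw [hw, Nat.mod_self] at h1
      have := x.isLt; have := w.isLt; have := y.isLt
      simp only [cd]; omega

lemma cd_le_length {n : ℕ} (hn : 2 ≤ n) {x y : Fin n} (p : (cycGraph n).Walk x y) :
    cd n x y ≤ p.length := by
  induction p with
  | nil => simp [cd]
  | @cons a b c h p ih =>
    have := cd_step hn h c
    simp only [SimpleGraph.Walk.length_cons]
    omega

lemma cyc_exists_walk {n : ℕ} (hn : 2 ≤ n) (k : ℕ) (x : Fin n) :
    ∃ p : (cycGraph n).Walk x ⟨(x.val + k) % n, Nat.mod_lt _ (by omega)⟩, p.length = k := by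
  induction k generalizing x with
  | zero =>
    have : (⟨(x.val + 0) % n, Nat.mod_lt _ (by omega)⟩ : Fin n) = x := by
      ext; simp [Nat.mod_eq_of_lt x.isLt]
    rw [this]; exact ⟨SimpleGraph.Walk.nil, rfl⟩
  | succ k ih =>
    set x1 : Fin n := ⟨(x.val + 1) % n, Nat.mod_lt _ (by omega)⟩ with hx1
    have hadj : (cycGraph n).Adj x x1 := by
      refine ⟨?_, Or.inl rfl⟩
      intro hcontra
      have : x.val = (x.val + 1) % n := congrArg Fin.val hcontra
      rcases Nat.lt_or_ge (x.val + 1) n with h2 | h2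
      · rw [Nat.mod_eq_of_lt h2] at this; omega
      · have hx : x.val + 1 = n := by have := x.isLt; omega
        rw [hx, Nat.mod_self] at this; omega
    obtain ⟨p, hp⟩ := ih x1
    have hend : (⟨(x1.val + k) % n, Nat.mod_lt _ (by omega)⟩ : Fin n)
        = ⟨(x.val + (k + 1)) % n, Nat.mod_lt _ (by omega)⟩ := by
      ext
      show ((x.val + 1) % n + k) % n = (x.val + (k + 1)) % n
      rw [Nat.mod_add_mod]; ring_nf
    refine ⟨SimpleGraph.Walk.cons hadj (p.copy rfl hend), ?_⟩
    simp [hp]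

lemma cyc_dist_le {n : ℕ} (hn : 2 ≤ n) (k : ℕ) (x y : Fin n) (h : (x.val + k) % n = y.val) :
    (cycGraph n).dist x y ≤ k := by
  obtain ⟨p, hp⟩ := cyc_exists_walk hn k x
  have heq : (⟨(x.val + k) % n, Nat.mod_lt _ (by omega)⟩ : Fin n) = y := by ext; exact h
  calc (cycGraph n).dist x y ≤ (p.copy rfl heq).length := SimpleGraph.dist_le _
  _ = k := by simpa using hp

lemma cyc_reachable {n : ℕ} (hn : 2 ≤ n) (x y : Fin n) : (cycGraph n).Reachable x y := by
  obtain ⟨p, -⟩ := cyc_exists_walk hn (y.val + n - x.val) x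
  have heq : (⟨(x.val + (y.val + n - x.val)) % n, Nat.mod_lt _ (by omega)⟩ : Fin n) = y := by
    ext
    have hx := x.isLt; have hy := y.isLt
    show (x.val + (y.val + n - x.val)) % n = y.val
    have h2 : x.val + (y.val + n - x.val) = y.val + n := by omega
    rw [h2, Nat.add_mod_right, Nat.mod_eq_of_lt hy]
  exact ⟨p.copy rfl heq⟩

lemma cyc_dist_eq {n : ℕ} (hn : 2 ≤ n) (x y : Fin n) :
    (cycGraph n).dist x y = cd n x y := by
  have hub : ∀ a b : Fin n, a.val ≤ b.val → (cycGraph n).dist a b ≤ cd n a b := by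
    intro a b hab
    have hbn := b.isLt; have han := a.isLt
    have h1 : (cycGraph n).dist a b ≤ b.val - a.val :=
      cyc_dist_le hn _ a b (by rw [Nat.mod_eq_of_lt (by omega)]; omega)
    have h2 : (cycGraph n).dist a b ≤ n - (b.val - a.val) := by
      rw [SimpleGraph.dist_comm]
      refine cyc_dist_le hn _ b a ?_
      have hb := b.isLt; have ha := a.isLt
      have : b.val + (n - (b.val - a.val)) = a.val + n := by omega
      rw [this, Nat.add_mod_right, Nat.mod_eq_of_lt ha]
    simp only [cd]
    omega
  refine le_antisymm ?_ ?_
  · rcases le_or_gt x.val y.val with h | h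
    · exact hub x y h
    · rw [SimpleGraph.dist_comm, cd_comm]; exact hub y x (le_of_lt h)
  · obtain ⟨p, hp⟩ := (cyc_reachable hn x y).exists_walk_length_eq_dist
    rw [← hp]; exact cd_le_length hn p

lemma cyc_key {m : ℕ} (hm : 1 ≤ m) (x y z : Fin (2*m)) (hz : z.val = (x.val + m) % (2*m)) :
    (cycGraph (2*m)).dist x y + (cycGraph (2*m)).dist y z = m := by
  have hx := x.isLt; have hy := y.isLt; have hzlt := z.isLt
  rcases Nat.lt_or_ge (x.val + m) (2*m) with h | h
  · rw [Nat.mod_eq_of_lt h] at hz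
    rw [cyc_dist_eq (by omega), cyc_dist_eq (by omega)]
    simp only [cd]; omega
  · rw [Nat.mod_eq_sub_mod h, Nat.mod_eq_of_lt (by omega)] at hz
    rw [cyc_dist_eq (by omega), cyc_dist_eq (by omega)]
    simp only [cd]; omega

lemma cyc_dist_zero {n : ℕ} (hn : 2 ≤ n) {x y : Fin n}
    (h : (cycGraph n).dist x y = 0) : x = y := by
  rw [cyc_dist_eq hn] at h
  have hx := x.isLt; have hy := y.isLt
  simp only [cd] at h
  ext; omega

lemma cyc_srs {m : ℕ} (hm : 3 ≤ m) :
    IsStrongResolvingSet (cycGraph (2*m))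
      ↑(Finset.univ.map ⟨fun k : Fin m => (⟨k.val, by omega⟩ : Fin (2*m)),
          by intro a b hab; simpa [Fin.ext_iff] using hab⟩) := by
  intro x y hxy
  have hmem : ∀ v : Fin (2*m), v.val < m →
      v ∈ (Finset.univ.map ⟨fun k : Fin m => (⟨k.val, by omega⟩ : Fin (2*m)),
          by intro a b hab; simpa [Fin.ext_iff] using hab⟩ : Finset (Fin (2*m))) := by
    intro v hv
    simp only [Finset.mem_map, Finset.mem_univ, true_and, Function.Embedding.coeFn_mk]
    exact ⟨⟨v.val, hv⟩, Fin.ext rfl⟩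
  by_cases hx : x.val < m
  · refine ⟨x, by simpa using hmem x hx, Or.inl ?_⟩
    simp [LiesOnGeodesic]
  · by_cases hy : y.val < m
    · refine ⟨y, by simpa using hmem y hy, Or.inr ?_⟩
      simp [LiesOnGeodesic]
    · have hxlt := x.isLt
      set z : Fin (2*m) := ⟨x.val - m, by omega⟩ with hzdef
      have hz : z.val = (x.val + m) % (2*m) := by
        rw [Nat.mod_eq_sub_mod (by omega), Nat.mod_eq_of_lt (by omega)]
        simp [hzdef]; omega
      refine ⟨z, by simpa using hmem z (by simp [hzdef]; omega), Or.inr ?_⟩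
      show (cycGraph (2*m)).dist x y + (cycGraph (2*m)).dist y z = (cycGraph (2*m)).dist x z
      rw [cyc_key (by omega) x y z hz]
      have := cyc_key (by omega) x x z hz
      rw [SimpleGraph.dist_self] at this
      omega

lemma cyc_sdim {m : ℕ} (hm : 3 ≤ m) : sdim (cycGraph (2*m)) = m := by
  have hmem : m ∈ {n : ℕ | ∃ S : Finset (Fin (2*m)), S.card = n ∧
      IsStrongResolvingSet (cycGraph (2*m)) ↑S} := by
    refine ⟨_, ?_, cyc_srs hm⟩
    simp
  refine le_antisymm (Nat.sInf_le hmem) (le_csInf ⟨m, hmem⟩ ?_)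
  rintro n ⟨S, hcard, hS⟩
  by_contra hn
  push_neg at hn
  -- there is an antipodal pair disjoint from S
  obtain ⟨c, hc, hcT⟩ : ∃ c ∈ Finset.range m, c ∉ S.image (fun x : Fin (2*m) => x.val % m) := by
    by_contra h
    push_neg at h
    have hsub : Finset.range m ⊆ S.image (fun x : Fin (2*m) => x.val % m) := fun c hc => h c hc
    have h1 := Finset.card_le_card hsub
    have h2 := Finset.card_image_le (f := fun x : Fin (2*m) => x.val % m) (s := S)
    rw [Finset.card_range] at h1
    omega
  rw [Finset.mem_range] at hc
  set x : Fin (2*m) := ⟨c, by omega⟩ with hxdef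
  set x' : Fin (2*m) := ⟨c + m, by omega⟩ with hx'def
  have hxS : x ∉ S := by
    intro hmemS
    exact hcT (Finset.mem_image.mpr ⟨x, hmemS, by simp [hxdef, Nat.mod_eq_of_lt hc]⟩)
  have hx'S : x' ∉ S := by
    intro hmemS
    refine hcT (Finset.mem_image.mpr ⟨x', hmemS, ?_⟩)
    simp only [hx'def]
    show (c + m) % m = c
    rw [Nat.add_mod_right, Nat.mod_eq_of_lt hc]
  have hz1 : x'.val = (x.val + m) % (2*m) := by
    simp only [hxdef, hx'def]
    rw [Nat.mod_eq_of_lt (by omega)]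
  have hz2 : x.val = (x'.val + m) % (2*m) := by
    simp only [hxdef, hx'def]
    show c = (c + m + m) % (2*m)
    have : c + m + m = c + 2*m := by ring
    rw [this, Nat.add_mod_right, Nat.mod_eq_of_lt (by omega)]
  have hd : (cycGraph (2*m)).dist x x' = m := by
    have := cyc_key (by omega) x x x' hz1
    rwa [SimpleGraph.dist_self, zero_add] at this
  obtain ⟨z, hzS, hgeo⟩ := hS x x' (by intro h; have := congrArg Fin.val h; simp [hxdef, hx'def] at this; omega)
  rw [Finset.mem_coe] at hzS
  simp only [LiesOnGeodesic] at hgeo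
  rcases hgeo with hgeo | hgeo
  · -- dist x' x + dist x z = dist x' z
    have hub : (cycGraph (2*m)).dist x' z ≤ m := by
      have := cyc_key (by omega) x' z x hz2
      omega
    rw [show (cycGraph (2*m)).dist x' x = m by rw [SimpleGraph.dist_comm]; exact hd] at hgeo
    have h0 : (cycGraph (2*m)).dist x z = 0 := by omega
    exact hxS (cyc_dist_zero (by omega) h0 ▸ hzS)
  · have hub : (cycGraph (2*m)).dist x z ≤ m := by
      have := cyc_key (by omega) x z x' hz1
      omega
    rw [hd] at hgeo
    have h0 : (cycGraph (2*m)).dist x' z = 0 := by omega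
    exact hx'S (cyc_dist_zero (by omega) h0 ▸ hzS)

variable {m : ℕ}


/-- prism distance formula -/
def pd (x y : Fin m × Fin 2) : ℕ :=
  (max x.1.val y.1.val - min x.1.val y.1.val) + (max x.2.val y.2.val - min x.2.val y.2.val)

lemma pd_comm (x y : Fin m × Fin 2) : pd x y = pd y x := by
  simp [pd]; omega

lemma pd_step {x w : (Fin m) × (Fin 2)}
    (h : (pathGraph m □ (⊤ : SimpleGraph (Fin 2))).Adj x w) (y : Fin m × Fin 2) :
    pd x y ≤ pd w y + 1 := by
  rw [boxProd_adj] at h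
  have h1m := x.1.isLt; have h2m := w.1.isLt; have h3m := y.1.isLt
  have h12 := x.2.isLt; have h22 := w.2.isLt; have h32 := y.2.isLt
  rcases h with ⟨hp, he⟩ | ⟨ht, he⟩
  · rw [pathGraph_adj] at hp
    have he' : x.2.val = w.2.val := congrArg Fin.val he
    simp only [pd]; omega
  · have ht' : x.2.val ≠ w.2.val := fun hc => ht.ne (Fin.ext hc)
    have he' : x.1.val = w.1.val := congrArg Fin.val he
    simp only [pd]; omega

lemma pd_le_length {x y : Fin m × Fin 2}
    (p : (pathGraph m □ (⊤ : SimpleGraph (Fin 2))).Walk x y) : pd x y ≤ p.length := by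
  induction p with
  | nil => simp [pd]
  | @cons a b c h p ih =>
    have := pd_step h c
    simp only [SimpleGraph.Walk.length_cons]
    omega

lemma prism_exists_walk_layer (d : ℕ) (i j : Fin m) (s : Fin 2) (h : j.val = i.val + d) :
    ∃ p : (pathGraph m □ (⊤ : SimpleGraph (Fin 2))).Walk (i, s) (j, s), p.length = d := by
  induction d generalizing i with
  | zero =>
    have : i = j := Fin.ext (by omega)
    subst this; exact ⟨SimpleGraph.Walk.nil, rfl⟩
  | succ d ih =>
    have hj := j.isLt
    set i1 : Fin m := ⟨i.val + 1, by omega⟩ with hi1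
    have hadj : (pathGraph m □ (⊤ : SimpleGraph (Fin 2))).Adj (i, s) (i1, s) := by
      rw [boxProd_adj]
      exact Or.inl ⟨pathGraph_adj.mpr (Or.inl rfl), rfl⟩
    obtain ⟨p, hp⟩ := ih i1 (by show j.val = i.val + 1 + d; omega)
    exact ⟨SimpleGraph.Walk.cons hadj p, by simp [hp]⟩

lemma prism_cross (j : Fin m) {s t : Fin 2} (hst : s ≠ t) :
    (pathGraph m □ (⊤ : SimpleGraph (Fin 2))).Adj (j, s) (j, t) := by
  rw [boxProd_adj]; exact Or.inr ⟨hst, rfl⟩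

lemma prism_dist_le_pd_aux {i j : Fin m} {s t : Fin 2} (hij : i.val ≤ j.val) :
    (pathGraph m □ (⊤ : SimpleGraph (Fin 2))).dist (i, s) (j, t) ≤ pd (i, s) (j, t) := by
  obtain ⟨p, hp⟩ := prism_exists_walk_layer (j.val - i.val) i j s (by omega)
  by_cases hst : s = t
  · subst hst
    have : pd (i, s) (j, s) = j.val - i.val := by simp only [pd]; omega
    rw [this, ← hp]
    exact SimpleGraph.dist_le p
  · have hpd : pd (i, s) (j, t) = (j.val - i.val) + 1 := by
      have : s.val ≠ t.val := fun hc => hst (Fin.ext hc)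
      have := s.isLt; have := t.isLt
      simp only [pd]; omega
    calc (pathGraph m □ (⊤ : SimpleGraph (Fin 2))).dist (i, s) (j, t)
        ≤ (p.concat (prism_cross j hst)).length := SimpleGraph.dist_le _
    _ = pd (i, s) (j, t) := by rw [SimpleGraph.Walk.length_concat, hp, hpd]

lemma prism_reachable (x y : Fin m × Fin 2) :
    (pathGraph m □ (⊤ : SimpleGraph (Fin 2))).Reachable x y := by
  obtain ⟨i, s⟩ := x; obtain ⟨j, t⟩ := y
  have key : ∀ a b : Fin m, a.val ≤ b.val → ∀ u : Fin 2,
      (pathGraph m □ (⊤ : SimpleGraph (Fin 2))).Reachable (a, u) (b, u) := by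
    intro a b hab u
    obtain ⟨p, -⟩ := prism_exists_walk_layer (b.val - a.val) a b u (by omega)
    exact ⟨p⟩
  have h1 : (pathGraph m □ (⊤ : SimpleGraph (Fin 2))).Reachable (i, s) (j, s) := by
    rcases le_or_gt i.val j.val with h | h
    · exact key i j h s
    · exact (key j i (le_of_lt h) s).symm
  refine h1.trans ?_
  by_cases hst : s = t
  · subst hst; exact SimpleGraph.Reachable.refl _
  · exact (prism_cross j hst).reachable

lemma prism_dist_eq (x y : Fin m × Fin 2) :
    (pathGraph m □ (⊤ : SimpleGraph (Fin 2))).dist x y = pd x y := by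
  refine le_antisymm ?_ ?_
  · obtain ⟨i, s⟩ := x; obtain ⟨j, t⟩ := y
    rcases le_or_gt i.val j.val with h | h
    · exact prism_dist_le_pd_aux h
    · rw [SimpleGraph.dist_comm, pd_comm]
      exact prism_dist_le_pd_aux (le_of_lt h)
  · obtain ⟨p, hp⟩ := (prism_reachable x y).exists_walk_length_eq_dist
    rw [← hp]; exact pd_le_length p

lemma prism_srs (hm : 3 ≤ m) :
    IsStrongResolvingSet (pathGraph m □ (⊤ : SimpleGraph (Fin 2)))
      ↑({((⟨0, by omega⟩ : Fin m), (0 : Fin 2)),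
         ((⟨m - 1, by omega⟩ : Fin m), (0 : Fin 2))} : Finset (Fin m × Fin 2)) := by
  rintro ⟨i, s⟩ ⟨j, t⟩ hxy
  have him := i.isLt; have hjm := j.isLt; have hs2 := s.isLt; have ht2 := t.isLt
  rcases le_or_gt s.val t.val with hst | hst
  · rcases le_or_gt i.val j.val with hij | hij
    · refine ⟨((⟨0, by omega⟩ : Fin m), (0 : Fin 2)), by simp, Or.inl ?_⟩
      simp only [LiesOnGeodesic, prism_dist_eq, pd, Fin.val_zero]
      omega
    · refine ⟨((⟨m - 1, by omega⟩ : Fin m), (0 : Fin 2)), by simp, Or.inl ?_⟩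
      simp only [LiesOnGeodesic, prism_dist_eq, pd, Fin.val_zero]
      omega
  · rcases le_or_gt j.val i.val with hij | hij
    · refine ⟨((⟨0, by omega⟩ : Fin m), (0 : Fin 2)), by simp, Or.inr ?_⟩
      simp only [LiesOnGeodesic, prism_dist_eq, pd, Fin.val_zero]
      omega
    · refine ⟨((⟨m - 1, by omega⟩ : Fin m), (0 : Fin 2)), by simp, Or.inr ?_⟩
      simp only [LiesOnGeodesic, prism_dist_eq, pd, Fin.val_zero]
      omega

lemma prism_sdim (hm : 3 ≤ m) :
    sdim (pathGraph m □ (⊤ : SimpleGraph (Fin 2))) = 2 := by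
  have hmem : 2 ∈ {n : ℕ | ∃ S : Finset (Fin m × Fin 2), S.card = n ∧
      IsStrongResolvingSet (pathGraph m □ (⊤ : SimpleGraph (Fin 2))) ↑S} := by
    refine ⟨{((⟨0, by omega⟩ : Fin m), (0 : Fin 2)),
             ((⟨m - 1, by omega⟩ : Fin m), (0 : Fin 2))}, ?_, prism_srs hm⟩
    rw [Finset.card_pair]
    intro hc
    have : (0 : ℕ) = m - 1 := congrArg (fun p => (Prod.fst p).val) hc
    omega
  refine le_antisymm (Nat.sInf_le hmem) (le_csInf ⟨2, hmem⟩ ?_)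
  rintro n ⟨S, hcard, hS⟩
  by_contra hn
  push_neg at hn
  interval_cases n
  · -- S empty
    obtain ⟨z, hz, -⟩ := hS ((⟨0, by omega⟩ : Fin m), (0 : Fin 2))
      ((⟨0, by omega⟩ : Fin m), (1 : Fin 2)) (by intro h; exact absurd (congrArg (fun p => (Prod.snd p).val) h) (by simp))
    rw [Finset.card_eq_zero] at hcard
    simp [hcard] at hz
  · -- S = {z}
    rw [Finset.card_eq_one] at hcard
    obtain ⟨z, rfl⟩ := hcard
    obtain ⟨a, u⟩ := z
    have ham := a.isLt; have hu2 := u.isLt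
    have main : ∀ b : Fin m, (b.val = a.val + 1 ∨ b.val + 1 = a.val) → False := by
      intro b hb
      have hbm := b.isLt
      set x : Fin m × Fin 2 := (a, ⟨1 - u.val, by omega⟩) with hxdef
      set y : Fin m × Fin 2 := (b, u) with hydef
      have hxy : x ≠ y := by
        intro hc
        have := congrArg (fun p => (Prod.snd p).val) hc
        simp only [hxdef, hydef] at this
        omega
      obtain ⟨z', hz', hgeo⟩ := hS x y hxy
      simp only [Finset.coe_singleton, Set.mem_singleton_iff] at hz'
      subst hz'
      simp only [LiesOnGeodesic, prism_dist_eq, pd, hxdef, hydef, Fin.val_mk] at hgeo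
      rcases hgeo with hgeo | hgeo <;> omega
    by_cases h : a.val + 1 < m
    · exact main ⟨a.val + 1, h⟩ (Or.inl rfl)
    · exact main ⟨a.val - 1, by omega⟩ (Or.inr (by simp [Fin.val_mk]; omega))

def embF (m : ℕ) (i : Fin (2*m)) : Fin m × Fin 2 :=
  (⟨min i.val (2*m - 1 - i.val), by have := i.isLt; omega⟩,
   ⟨i.val / m, Nat.div_lt_of_lt_mul (by have := i.isLt; omega)⟩)

lemma div_facts {m : ℕ} (i : Fin (2*m)) :
    (i.val < m → i.val / m = 0) ∧ (m ≤ i.val → i.val / m = 1) := by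
  constructor
  · exact Nat.div_eq_of_lt
  · intro h
    have hlt := i.isLt
    rw [Nat.div_eq_sub_div (by omega) h, Nat.div_eq_of_lt (by omega)]

lemma embF_injective (m : ℕ) : Function.Injective (embF m) := by
  intro i j h
  have h1 : min i.val (2*m - 1 - i.val) = min j.val (2*m - 1 - j.val) :=
    congrArg (fun p => (Prod.fst p).val) h
  have h2 : i.val / m = j.val / m := congrArg (fun p => (Prod.snd p).val) h
  obtain ⟨hi0, hi1⟩ := div_facts i
  obtain ⟨hj0, hj1⟩ := div_facts j
  have hilt := i.isLt; have hjlt := j.isLt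
  ext
  rcases Nat.lt_or_ge i.val m with hc | hc <;> rcases Nat.lt_or_ge j.val m with hd | hd <;>
    simp only [hi0, hi1, hj0, hj1, hc, hd] at h2 ⊢ <;> omega

lemma embF_hom_aux {m : ℕ} (hm : 3 ≤ m) {i j : Fin (2*m)}
    (h : (i.val + 1) % (2*m) = j.val) :
    (pathGraph m □ (⊤ : SimpleGraph (Fin 2))).Adj (embF m i) (embF m j) := by
  obtain ⟨hi0, hi1⟩ := div_facts i
  obtain ⟨hj0, hj1⟩ := div_facts j
  have hilt := i.isLt; have hjlt := j.isLt
  rw [boxProd_adj]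
  rcases Nat.lt_or_ge (i.val + 1) (2*m) with hlt | hge
  · rw [Nat.mod_eq_of_lt hlt] at h
    -- j.val = i.val + 1
    rcases Nat.lt_or_ge (i.val + 1) m with h1 | h1
    · -- both in layer 0
      refine Or.inl ⟨pathGraph_adj.mpr (Or.inl ?_), Fin.ext ?_⟩
      · show min i.val (2*m - 1 - i.val) + 1 = min j.val (2*m - 1 - j.val)
        omega
      · show i.val / m = j.val / m
        rw [hi0 (by omega), hj0 (by omega)]
    · rcases Nat.lt_or_ge i.val m with h2 | h2
      · -- i in layer 0, j in layer 1 (j.val = m)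
        refine Or.inr ⟨?_, Fin.ext ?_⟩
        · show (⟨i.val / m, _⟩ : Fin 2) ≠ ⟨j.val / m, _⟩
          intro hc
          have h3 : i.val / m = j.val / m := congrArg Fin.val hc
          rw [hi0 h2, hj1 (by omega)] at h3
          omega
        · show min i.val (2*m - 1 - i.val) = min j.val (2*m - 1 - j.val)
          omega
      · -- both in layer 1
        refine Or.inl ⟨pathGraph_adj.mpr (Or.inr ?_), Fin.ext ?_⟩
        · show min j.val (2*m - 1 - j.val) + 1 = min i.val (2*m - 1 - i.val)
          omega
        · show i.val / m = j.val / m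
          rw [hi1 h2, hj1 (by omega)]
  · -- wrap-around: i.val = 2m - 1, j.val = 0
    have hiv : i.val + 1 = 2*m := by omega
    rw [hiv, Nat.mod_self] at h
    refine Or.inr ⟨?_, Fin.ext ?_⟩
    · show (⟨i.val / m, _⟩ : Fin 2) ≠ ⟨j.val / m, _⟩
      intro hc
      have h3 : i.val / m = j.val / m := congrArg Fin.val hc
      rw [hi1 (by omega), hj0 (by omega)] at h3
      omega
    · show min i.val (2*m - 1 - i.val) = min j.val (2*m - 1 - j.val)
      omega

lemma embF_hom (hm : 3 ≤ m) : ∃ f : cycGraph (2*m) →g (pathGraph m □ (⊤ : SimpleGraph (Fin 2))),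
    Function.Injective f := by
  refine ⟨⟨embF m, ?_⟩, embF_injective m⟩
  rintro i j ⟨-, h | h⟩
  · exact embF_hom_aux hm h
  · exact (embF_hom_aux hm h).symm

end Aux

theorem cycle_subgraph_prism_sdim_ratio (m : ℕ) (hm : 3 ≤ m) :
    (∃ f : cycGraph (2 * m) →g (pathGraph m □ (⊤ : SimpleGraph (Fin 2))),
        Function.Injective f) ∧
    sdim (cycGraph (2 * m)) = m ∧
    sdim (pathGraph m □ (⊤ : SimpleGraph (Fin 2))) = 2 := ⟨embF_hom hm, cyc_sdim hm, prism_sdim hm⟩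
end

section
/- For any tree T of order at least two, sdim(T) = σ(T) − 1, where σ(T) is the number of leaves of T. -/
open SimpleGraph

variable {V : Type*} {W : Type*}

section Aux

variable {G : SimpleGraph V}

/-- In a tree, every path realizes the distance. -/
lemma aux_path_length_eq_dist (hG : G.Connected) (hac : G.IsAcyclic)
    {x y : V} (p : G.Walk x y) (hp : p.IsPath) : p.length = G.dist x y := by
  obtain ⟨q, hq, hql⟩ := hG.exists_path_of_dist x y
  have := hac.path_unique ⟨p, hp⟩ ⟨q, hq⟩
  rw [← hql]
  exact congrArg Walk.length (congrArg Subtype.val this)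

/-- A leaf's unique neighbor. -/
lemma aux_leaf_nbr_unique [Fintype V] [DecidableEq V] [DecidableRel G.Adj]
    {x a b : V} (hx : G.degree x = 1) (ha : G.Adj x a) (hb : G.Adj x b) : a = b := by
  rw [← G.card_neighborFinset_eq_degree, Finset.card_eq_one] at hx
  obtain ⟨c, hc⟩ := hx
  have ha' : a ∈ G.neighborFinset x := (G.mem_neighborFinset x a).2 ha
  have hb' : b ∈ G.neighborFinset x := (G.mem_neighborFinset x b).2 hb
  rw [hc, Finset.mem_singleton] at ha' hb'
  rw [ha', hb']

/-- Going toward a leaf: `dist w u + 1 ≤ dist w x` where `u` is the leaf `x`'s neighbor. -/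
lemma aux_leaf_dist [Fintype V] [DecidableEq V] [DecidableRel G.Adj]
    (hG : G.Connected) (hac : G.IsAcyclic)
    {x u w : V} (hx : G.degree x = 1) (hu : G.Adj x u) (hw : w ≠ x) :
    G.dist w u + 1 ≤ G.dist w x := by
  obtain ⟨p, hp, hpl⟩ := hG.exists_path_of_dist w x
  obtain ⟨v, hadj, q, hcons⟩ := Walk.exists_eq_cons_of_ne (Ne.symm hw) p.reverse
  have hrp : p.reverse.IsPath := hp.reverse
  rw [hcons, Walk.cons_isPath_iff] at hrp
  have hv : v = u := aux_leaf_nbr_unique hx hadj hu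
  have hlen : q.length + 1 = G.dist w x := by
    have := Walk.length_reverse p
    rw [hcons] at this
    simpa [hpl] using this
  rw [← hv]
  have h6 : G.dist w v = G.dist v w := SimpleGraph.dist_comm
  have h7 : G.dist v w ≤ q.length := SimpleGraph.dist_le q
  omega

/-- A leaf is not interior to any geodesic. -/
lemma aux_leaf_not_interior [Fintype V] [DecidableEq V] [DecidableRel G.Adj]
    (hG : G.Connected) (hac : G.IsAcyclic)
    {x y z : V} (hx : G.degree x = 1) (hy : y ≠ x) (hz : z ≠ x)
    (h : G.dist y x + G.dist x z = G.dist y z) : False := by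
  obtain ⟨u, hu⟩ := (G.degree_pos_iff_exists_adj x).1 (by omega : 0 < G.degree x)
  have h1 : G.dist y u + 1 ≤ G.dist y x := aux_leaf_dist hG hac hx hu hy
  have h2 : G.dist z u + 1 ≤ G.dist z x := aux_leaf_dist hG hac hx hu hz
  have h3 : G.dist y z ≤ G.dist y u + G.dist u z := hG.dist_triangle
  have h4 : G.dist u z = G.dist z u := SimpleGraph.dist_comm
  have h5 : G.dist x z = G.dist z x := SimpleGraph.dist_comm
  omega

/-- Extension lemma: beyond `y` (away from `x`) there is a leaf. -/
lemma aux_exists_leaf_ext [Fintype V] [DecidableEq V] [DecidableRel G.Adj]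
    (hG : G.Connected) (hac : G.IsAcyclic)
    {x y : V} (hxy : x ≠ y) :
    ∃ z, G.degree z = 1 ∧ G.dist x y + G.dist y z = G.dist x z := by
  classical
  set A : Finset V := Finset.univ.filter
    (fun z => G.dist x y + G.dist y z = G.dist x z) with hA
  have hyA : y ∈ A := by simp [hA]
  obtain ⟨z, hzA, hzmax⟩ := A.exists_max_image (fun z => G.dist x z) ⟨y, hyA⟩
  have hzeq : G.dist x y + G.dist y z = G.dist x z := by
    simpa [hA] using hzA
  have hzx : z ≠ x := by
    intro h
    rw [h] at hzeq
    have h1 : G.dist x x = 0 := SimpleGraph.dist_self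
    have h0 : G.dist x y = 0 := by omega
    exact hxy (hG.dist_eq_zero_iff.1 h0)
  refine ⟨z, ?_, hzeq⟩
  by_contra hdeg
  obtain ⟨p, hp, hpl⟩ := hG.exists_path_of_dist x z
  obtain ⟨v, hadj, q, hcons⟩ := Walk.exists_eq_cons_of_ne hzx p.reverse
  have hrp : p.reverse.IsPath := hp.reverse
  rw [hcons, Walk.cons_isPath_iff] at hrp
  have hdeg1 : 1 < G.degree z := by
    have : 0 < G.degree z := (G.degree_pos_iff_exists_adj z).2 ⟨v, hadj⟩
    omega
  rw [← G.card_neighborFinset_eq_degree] at hdeg1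
  obtain ⟨w, hwmem, hwv⟩ := Finset.exists_mem_ne hdeg1 v
  rw [G.mem_neighborFinset] at hwmem
  -- w ∉ p.support
  have hwns : w ∉ p.support := by
    intro hws
    have hws' : w ∈ p.reverse.support := by
      rw [Walk.support_reverse, List.mem_reverse]; exact hws
    rw [hcons, Walk.support_cons, List.mem_cons] at hws'
    rcases hws' with h | hwq
    · exact G.irrefl (h ▸ hwmem)
    · -- build path z → w two ways
      have hqp : q.IsPath := hrp.1
      have hr : (q.takeUntil w hwq).IsPath := hqp.takeUntil hwq
      have hzr : z ∉ (q.takeUntil w hwq).support := fun hc =>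
        hrp.2 (Walk.support_takeUntil_subset q hwq hc)
      have hP1 : (Walk.cons hadj (q.takeUntil w hwq)).IsPath := hr.cons hzr
      have := hac.path_unique ⟨Walk.cons hadj (q.takeUntil w hwq), hP1⟩
        (SimpleGraph.Path.singleton hwmem)
      have hlen := congrArg Walk.length (congrArg Subtype.val this)
      simp [SimpleGraph.Path.singleton] at hlen
      exact hwv hlen.symm
  -- the path w → x through z
  have hadjwz : G.Adj w z := hwmem.symm
  have hP2 : (Walk.cons hadjwz p.reverse).IsPath := by
    refine hp.reverse.cons ?_
    rw [Walk.support_reverse, List.mem_reverse]; exact hwns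
  have hdxw : G.dist x w = G.dist x z + 1 := by
    have := aux_path_length_eq_dist hG hac _ hP2
    rw [Walk.length_cons, Walk.length_reverse, hpl] at this
    rw [SimpleGraph.dist_comm, ← this]
  have ht1 : G.dist x w ≤ G.dist x y + G.dist y w := hG.dist_triangle
  have ht2 : G.dist y w ≤ G.dist y z + G.dist z w := hG.dist_triangle
  have ht3 : G.dist z w ≤ 1 := by
    have := SimpleGraph.dist_le hwmem.toWalk
    simpa using this
  have hwA : w ∈ A := by
    simp only [hA, Finset.mem_filter, Finset.mem_univ, true_and]
    omega
  have := hzmax w hwA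
  omega

end Aux

theorem sdim_tree [Fintype V] [DecidableEq V] (G : SimpleGraph V)
    [DecidableRel G.Adj] (hG : G.Connected) (hac : G.IsAcyclic)
    (hn : 2 ≤ Fintype.card V) :
    sdim G = (Finset.univ.filter fun v => G.degree v = 1).card - 1 := by
  classical
  set L : Finset V := Finset.univ.filter (fun v => G.degree v = 1) with hL
  -- there is a leaf
  obtain ⟨a, b, hab⟩ := Fintype.exists_pair_of_one_lt_card (α := V) (by omega)
  obtain ⟨l₀, hl₀deg, -⟩ := aux_exists_leaf_ext hG hac hab
  have hl₀L : l₀ ∈ L := by simp [hL, hl₀deg]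
  -- membership: L.card - 1 is achieved
  have hmem : ∃ S : Finset V, S.card = L.card - 1 ∧ IsStrongResolvingSet G ↑S := by
    refine ⟨L.erase l₀, Finset.card_erase_of_mem hl₀L, ?_⟩
    intro x y hxy
    obtain ⟨z₁, hz₁deg, hz₁⟩ := aux_exists_leaf_ext hG hac hxy
    obtain ⟨z₂, hz₂deg, hz₂⟩ := aux_exists_leaf_ext hG hac (Ne.symm hxy)
    by_cases h1 : z₁ = l₀
    · by_cases h2 : z₂ = l₀
      · exfalso
        subst h1; subst h2
        have hxy0 : 0 < G.dist x y := hG.pos_dist_of_ne hxy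
        have : G.dist y x = G.dist x y := SimpleGraph.dist_comm
        omega
      · refine ⟨z₂, ?_, Or.inl hz₂⟩
        simp [hL, Finset.mem_erase, h2, hz₂deg]
    · refine ⟨z₁, ?_, Or.inr hz₁⟩
      simp [hL, Finset.mem_erase, h1, hz₁deg]
  obtain ⟨S₀, hS₀card, hS₀⟩ := hmem
  have hub : sdim G ≤ L.card - 1 := Nat.sInf_le ⟨S₀, hS₀card, hS₀⟩
  have hlb : L.card - 1 ≤ sdim G := by
    have hne : {n : ℕ | ∃ S : Finset V, S.card = n ∧ IsStrongResolvingSet G ↑S}.Nonempty :=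
      ⟨L.card - 1, S₀, hS₀card, hS₀⟩
    apply le_csInf hne
    rintro n ⟨S, hScard, hS⟩
    -- any two distinct leaves: one is in S
    have key : ∀ a b : V, a ∈ L → b ∈ L → a ≠ b → a ∈ S ∨ b ∈ S := by
      intro a b haL hbL hne
      rw [hL, Finset.mem_filter] at haL hbL
      obtain ⟨z, hzS, hz | hz⟩ := hS a b hne
      · left
        by_cases hza : z = a
        · exact hza ▸ hzS
        · exact absurd hz (fun h =>
            aux_leaf_not_interior hG hac haL.2 (Ne.symm hne) hza h)
      · right
        by_cases hzb : z = b
        · exact hzb ▸ hzS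
        · exact absurd hz (fun h =>
            aux_leaf_not_interior hG hac hbL.2 hne hzb h)
    by_cases hD : (L \ S).Nonempty
    · obtain ⟨a₀, ha₀⟩ := hD
      have hsub : L ⊆ S ∪ {a₀} := by
        intro b hb
        rw [Finset.mem_union, Finset.mem_singleton]
        by_cases hbS : b ∈ S
        · exact Or.inl hbS
        · right
          by_contra hba
          rw [Finset.mem_sdiff] at ha₀
          rcases key a₀ b ha₀.1 hb (fun h => hba h.symm) with h | h
          · exact ha₀.2 h
          · exact hbS h
      have := Finset.card_le_card hsub
      have := Finset.card_union_le S {a₀}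
      simp only [Finset.card_singleton] at this
      omega
    · rw [Finset.not_nonempty_iff_eq_empty, Finset.sdiff_eq_empty_iff_subset] at hD
      have := Finset.card_le_card hD
      omega
  omega
end

section
/- For n ≥ 3, sdim(C_n) = ⌈n/2⌉. -/
open SimpleGraph

variable {V : Type*} {W : Type*}

namespace SdimCycleAux

/-- The forward offset from `x` to `y` around the cycle. -/
def A (n x y : ℕ) : ℕ := (n + y - x) % n

/-- Cyclic distance. -/
def cd (n x y : ℕ) : ℕ := min (A n x y) (n - A n x y)

lemma A_eq {n x y : ℕ} (hx : x < n) (hy : y < n) :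
    A n x y = if x ≤ y then y - x else n + y - x := by
  unfold A
  split
  · rw [show n + y - x = n + (y - x) by omega, Nat.add_mod_left,
      Nat.mod_eq_of_lt (by omega)]
  · rw [Nat.mod_eq_of_lt (by omega)]

lemma succ_mod_eq {n x : ℕ} (hx : x < n) :
    (x + 1) % n = if x + 1 = n then 0 else x + 1 := by
  split
  · next h => rw [h, Nat.mod_self]
  · exact Nat.mod_eq_of_lt (by omega)

lemma add_mod_eq {n a b : ℕ} (ha : a < n) (hb : b ≤ n) :
    (a + b) % n = if a + b < n then a + b else a + b - n := by
  split
  · exact Nat.mod_eq_of_lt (by assumption)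
  · conv_lhs => rw [show a + b = (a + b - n) + n from by omega]
    rw [Nat.add_mod_right, Nat.mod_eq_of_lt (by omega)]

lemma exists_walk {n : ℕ} (hn : 3 ≤ n) : ∀ (t : ℕ) (i j : Fin n),
    A n i.val j.val = t → ∃ p : (cycGraph n).Walk i j, p.length = t := by
  intro t
  induction t with
  | zero =>
    intro i j h
    rw [A_eq i.isLt j.isLt] at h
    have : i = j := by
      apply Fin.ext
      have := i.isLt; have := j.isLt
      split at h <;> omega
    subst this
    exact ⟨SimpleGraph.Walk.nil, rfl⟩
  | succ t ih =>
    intro i j h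
    have hklt : (i.val + 1) % n < n := Nat.mod_lt _ (by omega)
    set k : Fin n := ⟨(i.val + 1) % n, hklt⟩ with hk
    have hs := succ_mod_eq i.isLt
    have hadj : (cycGraph n).Adj i k := by
      refine ⟨?_, Or.inl rfl⟩
      intro he
      have : i.val = k.val := congrArg Fin.val he
      rw [hk] at this
      simp only at this
      rw [hs] at this
      have hilt := i.isLt
      split at this <;> omega
    have hkA : A n k.val j.val = t := by
      rw [A_eq i.isLt j.isLt] at h
      rw [A_eq k.isLt j.isLt]
      simp only [hk]
      rw [hs]
      have := i.isLt; have := j.isLt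
      split at h <;> split_ifs <;> omega
    obtain ⟨p, hp⟩ := ih k j hkA
    exact ⟨SimpleGraph.Walk.cons hadj p, by simp [hp]⟩

lemma A_lt {n x y : ℕ} (hx : x < n) (hy : y < n) : A n x y < n := by
  rw [A_eq hx hy]; split <;> omega

lemma A_rev {n x y : ℕ} (hx : x < n) (hy : y < n) (hne : x ≠ y) :
    A n y x = n - A n x y := by
  rw [A_eq hx hy, A_eq hy hx]
  split <;> split <;> omega

lemma cd_comm {n x y : ℕ} (hx : x < n) (hy : y < n) : cd n x y = cd n y x := by
  unfold cd
  rcases eq_or_ne x y with rfl | hne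
  · rfl
  · rw [A_rev hx hy hne, A_rev hy hx (Ne.symm hne)]
    have := A_lt hx hy
    have h0 : A n x y ≠ 0 := by
      rw [A_eq hx hy]; split <;> omega
    omega

lemma dist_le_cd {n : ℕ} (hn : 3 ≤ n) (i j : Fin n) :
    (cycGraph n).dist i j ≤ cd n i.val j.val := by
  rcases eq_or_ne i j with rfl | hne
  · rw [SimpleGraph.dist_self]
    omega
  · have h1 : (cycGraph n).dist i j ≤ A n i.val j.val := by
      obtain ⟨p, hp⟩ := exists_walk hn (A n i.val j.val) i j rfl
      exact hp ▸ SimpleGraph.dist_le p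
    have h2 : (cycGraph n).dist i j ≤ n - A n i.val j.val := by
      rw [SimpleGraph.dist_comm]
      obtain ⟨p, hp⟩ := exists_walk hn (A n j.val i.val) j i rfl
      have := hp ▸ SimpleGraph.dist_le p
      rwa [A_rev i.isLt j.isLt (fun h => hne (Fin.ext h))] at this
    unfold cd
    omega

lemma cd_step {n : ℕ} (hn : 3 ≤ n) {i k j : Fin n} (h : (cycGraph n).Adj i k) :
    cd n i.val j.val ≤ cd n k.val j.val + 1 := by
  obtain ⟨hne, hc | hc⟩ := h
  all_goals
  · unfold cd
    rw [A_eq i.isLt j.isLt, A_eq k.isLt j.isLt]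
    have hi := i.isLt; have hj := j.isLt; have hkk := k.isLt
    first
    | (rw [succ_mod_eq i.isLt] at hc; split_ifs at hc ⊢ <;> omega)
    | (rw [succ_mod_eq k.isLt] at hc; split_ifs at hc ⊢ <;> omega)

lemma cd_self {n x : ℕ} (hx : x < n) : cd n x x = 0 := by
  unfold cd
  rw [A_eq hx hx]
  simp

lemma cd_le_length {n : ℕ} (hn : 3 ≤ n) {i j : Fin n} (p : (cycGraph n).Walk i j) :
    cd n i.val j.val ≤ p.length := by
  induction p with
  | nil => rw [cd_self (by omega)]; omega
  | cons h p ih =>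
    rw [SimpleGraph.Walk.length_cons]
    calc cd n _ _ ≤ cd n _ _ + 1 := cd_step hn h
    _ ≤ p.length + 1 := by omega

lemma dist_eq_cd {n : ℕ} (hn : 3 ≤ n) (i j : Fin n) :
    (cycGraph n).dist i j = cd n i.val j.val := by
  refine le_antisymm (dist_le_cd hn i j) ?_
  have hr : (cycGraph n).Reachable i j :=
    ⟨(exists_walk hn (A n i.val j.val) i j rfl).choose⟩
  obtain ⟨p, hp⟩ := hr.exists_walk_length_eq_dist
  rw [← hp]
  exact cd_le_length hn p

lemma cd_le_half {n x y : ℕ} (hx : x < n) (hy : y < n) : cd n x y ≤ n / 2 := by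
  unfold cd
  have := A_lt hx hy
  omega

lemma cd_eq_zero {n x y : ℕ} (hx : x < n) (hy : y < n) (h : cd n x y = 0) : x = y := by
  unfold cd at h
  rw [A_eq hx hy] at h
  split at h <;> omega

lemma cd_antipode {n x : ℕ} (hn : 3 ≤ n) (hx : x < n) :
    cd n x ((x + n / 2) % n) = n / 2 := by
  have hy : (x + n / 2) % n < n := Nat.mod_lt _ (by omega)
  unfold cd
  rw [A_eq hx hy, add_mod_eq hx (by omega)]
  split_ifs <;> omega

end SdimCycleAux


open SdimCycleAux in
theorem sdim_cycle (n : ℕ) (hn : 3 ≤ n) :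
    sdim (cycGraph n) = (n + 1) / 2 := by
  classical
  set G := cycGraph n with hG
  -- the candidate strong resolving set
  have hmlt : ∀ x ∈ Finset.range ((n+1)/2), x < n := by
    intro x hx; rw [Finset.mem_range] at hx; omega
  set S : Finset (Fin n) := Finset.attachFin (Finset.range ((n+1)/2)) hmlt with hSdef
  have hmemS : ∀ i : Fin n, i ∈ S ↔ i.val < (n+1)/2 := by
    intro i
    rw [hSdef, Finset.mem_attachFin, Finset.mem_range]
  have hcard : S.card = (n+1)/2 := by
    rw [hSdef, Finset.card_attachFin, Finset.card_range]
  -- S is a strong resolving set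
  have hmid : ∀ x y : Fin n, ¬ x.val < (n+1)/2 → ¬ y.val < (n+1)/2 → x.val < y.val →
      ∃ z : Fin n, z.val < (n+1)/2 ∧ G.dist x y + G.dist y z = G.dist x z := by
    intro x y hx hy hlt
    have hyn := y.isLt
    have hzlt : x.val + n/2 - n < n := by omega
    set z : Fin n := ⟨x.val + n/2 - n, hzlt⟩ with hzdef
    have hzv : z.val = x.val + n/2 - n := rfl
    refine ⟨z, by omega, ?_⟩
    rw [dist_eq_cd hn, dist_eq_cd hn, dist_eq_cd hn]
    unfold SdimCycleAux.cd
    rw [A_eq x.isLt y.isLt, A_eq x.isLt z.isLt, A_eq y.isLt z.isLt]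
    split_ifs <;> omega
  have hsrs : IsStrongResolvingSet G ↑S := by
    intro x y hxy
    by_cases hx : x.val < (n+1)/2
    · refine ⟨x, Finset.mem_coe.mpr ((hmemS x).mpr hx), Or.inl ?_⟩
      unfold LiesOnGeodesic
      rw [SimpleGraph.dist_self, add_zero]
    by_cases hy : y.val < (n+1)/2
    · refine ⟨y, Finset.mem_coe.mpr ((hmemS y).mpr hy), Or.inr ?_⟩
      unfold LiesOnGeodesic
      rw [SimpleGraph.dist_self, add_zero]
    have hne : x.val ≠ y.val := fun h => hxy (Fin.ext h)
    rcases lt_or_gt_of_ne hne with h | h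
    · obtain ⟨z, hz, hgeo⟩ := hmid x y hx hy h
      refine ⟨z, Finset.mem_coe.mpr ((hmemS z).mpr hz), Or.inr ?_⟩
      exact hgeo
    · obtain ⟨z, hz, hgeo⟩ := hmid y x hy hx h
      refine ⟨z, Finset.mem_coe.mpr ((hmemS z).mpr hz), Or.inl ?_⟩
      exact hgeo
  have hmem : ((n+1)/2) ∈ {c : ℕ | ∃ T : Finset (Fin n), T.card = c ∧
      IsStrongResolvingSet G ↑T} := ⟨S, hcard, hsrs⟩
  refine le_antisymm (Nat.sInf_le hmem) (le_csInf ⟨_, hmem⟩ ?_)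
  rintro c ⟨T, rfl, hT⟩
  -- lower bound: every strong resolving set contains one of each antipodal pair
  set k : Fin n := ⟨n/2, by omega⟩ with hk
  have hvaladd : ∀ i : Fin n, (i + k).val = (i.val + n/2) % n := by
    intro i
    rw [Fin.val_add]
  have hpair : ∀ i : Fin n, i ∈ T ∨ i + k ∈ T := by
    intro i
    have hin := i.isLt
    have hne : i ≠ i + k := by
      intro he
      have : i.val = (i + k).val := congrArg Fin.val he
      rw [hvaladd i, add_mod_eq i.isLt (by omega)] at this
      split_ifs at this <;> omega
    have hdik : G.dist i (i + k) = n/2 := by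
      rw [dist_eq_cd hn, hvaladd i]
      exact cd_antipode hn i.isLt
    obtain ⟨z, hz, hgeo | hgeo⟩ := hT i (i + k) hne
    · left
      unfold LiesOnGeodesic at hgeo
      have h1 : G.dist (i+k) i = n/2 := by rw [SimpleGraph.dist_comm]; exact hdik
      have h2 : G.dist (i+k) z ≤ n/2 := by
        rw [dist_eq_cd hn]; exact cd_le_half (i+k).isLt z.isLt
      have h3 : G.dist i z = 0 := by omega
      have : i.val = z.val := by
        apply cd_eq_zero i.isLt z.isLt
        rw [← dist_eq_cd hn, h3]
      rwa [show i = z from Fin.ext this]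
    · right
      unfold LiesOnGeodesic at hgeo
      have h2 : G.dist i z ≤ n/2 := by
        rw [dist_eq_cd hn]; exact cd_le_half i.isLt z.isLt
      have h3 : G.dist (i+k) z = 0 := by omega
      have : (i+k).val = z.val := by
        apply cd_eq_zero (i+k).isLt z.isLt
        rw [← dist_eq_cd hn, h3]
      rwa [show i + k = z from Fin.ext this]
  -- counting argument
  have hinj : Function.Injective (fun a : Fin n => a + k) := by
    intro a b hab
    have : (a + k).val = (b + k).val := congrArg Fin.val hab
    rw [hvaladd a, hvaladd b, add_mod_eq a.isLt (by omega),
      add_mod_eq b.isLt (by omega)] at this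
    have := a.isLt; have := b.isLt
    apply Fin.ext
    split_ifs at * <;> omega
  have hdisj : Disjoint Tᶜ (Tᶜ.image (fun a => a + k)) := by
    rw [Finset.disjoint_left]
    intro a ha hb
    obtain ⟨b, hb', rfl⟩ := Finset.mem_image.mp hb
    rcases hpair b with h | h
    · exact (Finset.mem_compl.mp hb') h
    · exact (Finset.mem_compl.mp ha) h
  have hcu : Tᶜ.card + (Tᶜ.image (fun a => a + k)).card ≤ n := by
    rw [← Finset.card_union_of_disjoint hdisj]
    calc (Tᶜ ∪ Tᶜ.image (fun a => a + k)).card ≤ (Finset.univ : Finset (Fin n)).card :=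
      Finset.card_le_card (Finset.subset_univ _)
    _ = n := by rw [Finset.card_univ, Fintype.card_fin]
  rw [Finset.card_image_of_injective _ hinj, Finset.card_compl, Fintype.card_fin] at hcu
  have hTle : T.card ≤ n := by
    calc T.card ≤ (Finset.univ : Finset (Fin n)).card := Finset.card_le_card (Finset.subset_univ _)
    _ = n := by rw [Finset.card_univ, Fintype.card_fin]
  omega
end

section
/- Let G = K_{a_1,...,a_k} be a complete k-partite graph (k ≥ 2) of order n = Σ a_i ≥ 3, and let s be the number of singleton parts. Then sdim(G) = n − k if s = 0, and sdim(G) = n − k + s − 1 if s ≥ 1. -/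
open SimpleGraph

variable {V : Type*} {W : Type*}

namespace SdimCM

variable {k : ℕ} {a : Fin k → ℕ}

lemma adj_iff (x y : Σ i, Fin (a i)) :
    (completeMultipartiteGraph fun i => Fin (a i)).Adj x y ↔ x.1 ≠ y.1 := by
  simp

lemma dist_eq_one {x y : Σ i, Fin (a i)} (h : x.1 ≠ y.1) :
    (completeMultipartiteGraph fun i => Fin (a i)).dist x y = 1 :=
  dist_eq_one_iff_adj.mpr ((adj_iff x y).mpr h)

lemma walk2 (hk : 2 ≤ k) (ha : ∀ i, 1 ≤ a i) {x y : Σ i, Fin (a i)}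
    (h : x.1 = y.1) :
    ∃ p : (completeMultipartiteGraph fun i => Fin (a i)).Walk x y, p.length = 2 := by
  haveI : Nontrivial (Fin k) := Fin.nontrivial_iff_two_le.mpr hk
  obtain ⟨j, hj⟩ := exists_ne x.1
  refine ⟨Walk.cons (v := ⟨j, ⟨0, ha j⟩⟩) ((adj_iff _ _).mpr (fun e => hj e.symm))
    (Walk.cons ((adj_iff _ _).mpr (fun e => hj (e.trans h.symm))) Walk.nil),
    by simp⟩

lemma reach (hk : 2 ≤ k) (ha : ∀ i, 1 ≤ a i) (x y : Σ i, Fin (a i)) :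
    (completeMultipartiteGraph fun i => Fin (a i)).Reachable x y := by
  by_cases h : x.1 = y.1
  · obtain ⟨p, -⟩ := walk2 hk ha h
    exact ⟨p⟩
  · exact ((adj_iff x y).mpr h).reachable

lemma dist_le_two (hk : 2 ≤ k) (ha : ∀ i, 1 ≤ a i) (x y : Σ i, Fin (a i)) :
    (completeMultipartiteGraph fun i => Fin (a i)).dist x y ≤ 2 := by
  by_cases h : x.1 = y.1
  · obtain ⟨p, hp⟩ := walk2 hk ha h
    exact hp ▸ SimpleGraph.dist_le p
  · rw [dist_eq_one h]; omega

lemma dist_pos (hk : 2 ≤ k) (ha : ∀ i, 1 ≤ a i) {x y : Σ i, Fin (a i)} (hxy : x ≠ y) :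
    0 < (completeMultipartiteGraph fun i => Fin (a i)).dist x y :=
  (reach hk ha x y).pos_dist_of_ne hxy

lemma dist_eq_two (hk : 2 ≤ k) (ha : ∀ i, 1 ≤ a i) {x y : Σ i, Fin (a i)}
    (hxy : x ≠ y) (h : x.1 = y.1) :
    (completeMultipartiteGraph fun i => Fin (a i)).dist x y = 2 := by
  have h1 := dist_le_two hk ha x y
  have h2 : (completeMultipartiteGraph fun i => Fin (a i)).dist x y ≠ 1 := by
    intro e
    exact ((adj_iff x y).mp (dist_eq_one_iff_adj.mp e)) h
  have h3 := dist_pos hk ha hxy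
  omega

lemma lower (hk : 2 ≤ k) (ha : ∀ i, 1 ≤ a i)
    (S : Finset (Σ i, Fin (a i)))
    (hS : IsStrongResolvingSet (completeMultipartiteGraph fun i => Fin (a i)) ↑S) :
    (if (Finset.univ.filter fun i => a i = 1).card = 0
      then Fintype.card (Σ i, Fin (a i)) - k
      else Fintype.card (Σ i, Fin (a i)) - k +
        (Finset.univ.filter fun i => a i = 1).card - 1) ≤ S.card := by
  set C := Sᶜ with hC
  have claimA : ∀ u ∈ C, ∀ v ∈ C, u ≠ v → u.1 ≠ v.1 := by
    intro u hu v hv huv h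
    obtain ⟨z, hzS, hz⟩ := hS u v huv
    have hzS' : z ∈ S := hzS
    have hzu : z ≠ u := fun e => (Finset.mem_compl.mp hu) (e ▸ hzS')
    have hzv : z ≠ v := fun e => (Finset.mem_compl.mp hv) (e ▸ hzS')
    have d2 : (completeMultipartiteGraph fun i => Fin (a i)).dist v u = 2 :=
      dist_eq_two hk ha (Ne.symm huv) h.symm
    have d2' : (completeMultipartiteGraph fun i => Fin (a i)).dist u v = 2 :=
      dist_eq_two hk ha huv h
    have d3 := dist_pos hk ha (Ne.symm hzu)
    have d4 := dist_pos hk ha (Ne.symm hzv)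
    have d5 := dist_le_two hk ha v z
    have d6 := dist_le_two hk ha u z
    simp only [LiesOnGeodesic] at hz
    rcases hz with hz | hz <;> omega
  have claimB : ∀ u ∈ C, ∀ v ∈ C, u ≠ v → a u.1 = 1 → a v.1 = 1 → False := by
    intro u hu v hv huv h1 h2
    have hne : u.1 ≠ v.1 := claimA u hu v hv huv
    obtain ⟨z, hzS, hz⟩ := hS u v huv
    have hzS' : z ∈ S := hzS
    have hzu : z ≠ u := fun e => (Finset.mem_compl.mp hu) (e ▸ hzS')
    have hzv : z ≠ v := fun e => (Finset.mem_compl.mp hv) (e ▸ hzS')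
    have d1 : (completeMultipartiteGraph fun i => Fin (a i)).dist v u = 1 :=
      dist_eq_one (Ne.symm hne)
    have d1' : (completeMultipartiteGraph fun i => Fin (a i)).dist u v = 1 :=
      dist_eq_one hne
    have d3 := dist_pos hk ha (Ne.symm hzu)
    have d4 := dist_pos hk ha (Ne.symm hzv)
    have d5 := dist_le_two hk ha v z
    have d6 := dist_le_two hk ha u z
    simp only [LiesOnGeodesic] at hz
    rcases hz with hz | hz
    · -- dist v u + dist u z = dist v z, so dist v z = 2, so z.1 = v.1, so z = v
      have hfst : v.1 = z.1 := by
        by_contra hff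
        rw [dist_eq_one hff] at hz
        omega
      apply hzv
      obtain ⟨vi, vv⟩ := v
      obtain ⟨zi, zv⟩ := z
      simp only at hfst
      subst hfst
      have hlt1 := vv.isLt
      have hlt2 := zv.isLt
      simp only at h2
      congr 1
      exact Fin.ext (by omega)
    · have hfst : u.1 = z.1 := by
        by_contra hff
        rw [dist_eq_one hff] at hz
        omega
      apply hzu
      obtain ⟨ui, uv⟩ := u
      obtain ⟨zi, zv⟩ := z
      simp only at hfst
      subst hfst
      have hlt1 := uv.isLt
      have hlt2 := zv.isLt
      simp only at h1
      congr 1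
      exact Fin.ext (by omega)
  have hinj : Set.InjOn Sigma.fst (↑C : Set (Σ i, Fin (a i))) := by
    intro u hu v hv e
    by_contra huv
    exact claimA u hu v hv huv e
  set I := C.image Sigma.fst with hI
  have hCcard : C.card = I.card := (Finset.card_image_of_injOn hinj).symm
  have hI1 : (I.filter fun i => a i = 1).card ≤ 1 := by
    rw [Finset.card_le_one]
    intro i hi j hj
    obtain ⟨hiI, hia⟩ := Finset.mem_filter.mp hi
    obtain ⟨hjI, hja⟩ := Finset.mem_filter.mp hj
    obtain ⟨u, hu, rfl⟩ := Finset.mem_image.mp hiI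
    obtain ⟨v, hv, rfl⟩ := Finset.mem_image.mp hjI
    by_contra hij
    exact claimB u hu v hv (fun e => hij (congrArg Sigma.fst e)) hia hja
  have hI1s : (I.filter fun i => a i = 1).card ≤
      (Finset.univ.filter fun i => a i = 1).card :=
    Finset.card_le_card (Finset.filter_subset_filter _ (Finset.subset_univ I))
  have hI2 : (I.filter fun i => ¬a i = 1).card ≤
      (Finset.univ.filter fun i => ¬a i = 1).card :=
    Finset.card_le_card (Finset.filter_subset_filter _ (Finset.subset_univ I))
  have hsplitI := Finset.card_filter_add_card_filter_not
    (s := I) (p := fun i => a i = 1)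
  have hsplitU := Finset.card_filter_add_card_filter_not
    (s := (Finset.univ : Finset (Fin k))) (p := fun i => a i = 1)
  have hkcard : (Finset.univ : Finset (Fin k)).card = k := by simp
  have hSC : S.card + Sᶜ.card = Fintype.card (Σ i, Fin (a i)) :=
    Finset.card_add_card_compl S
  rw [hkcard] at hsplitU
  rw [← hC] at hSC
  have hkn : k ≤ Fintype.card (Σ i, Fin (a i)) := by
    have hc : Fintype.card (Σ i, Fin (a i)) = ∑ i, a i := by simp
    rw [hc]
    calc k = ∑ _i : Fin k, 1 := by simp
    _ ≤ ∑ i, a i := Finset.sum_le_sum fun i _ => ha i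
  split_ifs with hs <;> omega

lemma upper (hk : 2 ≤ k) (ha : ∀ i, 1 ≤ a i) (i₀ : Fin k) :
    ∃ S : Finset (Σ i, Fin (a i)),
      S.card = Fintype.card (Σ i, Fin (a i)) -
        (Finset.univ.filter fun i => 2 ≤ a i ∨ i = i₀).card ∧
      IsStrongResolvingSet (completeMultipartiteGraph fun i => Fin (a i)) ↑S := by
  classical
  set f : Fin k → Σ i, Fin (a i) := fun i => ⟨i, ⟨0, ha i⟩⟩ with hf
  have hfinj : Function.Injective f := fun i j e => congrArg Sigma.fst e
  set C := (Finset.univ.filter fun i => 2 ≤ a i ∨ i = i₀).image f with hCdef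
  refine ⟨Cᶜ, ?_, ?_⟩
  · rw [Finset.card_compl, hCdef, Finset.card_image_of_injective _ hfinj]
  · intro x y hxy
    by_cases hx : x ∈ Cᶜ
    · exact ⟨x, by simpa using hx, Or.inl (by simp [LiesOnGeodesic, SimpleGraph.dist_self])⟩
    by_cases hy : y ∈ Cᶜ
    · exact ⟨y, by simpa using hy, Or.inr (by simp [LiesOnGeodesic, SimpleGraph.dist_self])⟩
    have hxC : x ∈ C := by simpa using hx
    have hyC : y ∈ C := by simpa using hy
    obtain ⟨i, hi, rfl⟩ := Finset.mem_image.mp hxC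
    obtain ⟨j, hj, rfl⟩ := Finset.mem_image.mp hyC
    have hij : i ≠ j := fun e => hxy (by rw [e])
    have hi' := (Finset.mem_filter.mp hi).2
    have hj' := (Finset.mem_filter.mp hj).2
    by_cases h2 : 2 ≤ a j
    · set z : Σ i, Fin (a i) := ⟨j, ⟨1, h2⟩⟩ with hz
      have hzC : z ∉ C := by
        intro hzmem
        obtain ⟨l, -, hl⟩ := Finset.mem_image.mp hzmem
        rw [hf, hz, Sigma.ext_iff] at hl
        obtain ⟨rfl, hl2⟩ := hl
        rw [heq_iff_eq, Fin.ext_iff] at hl2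
        simp at hl2
      have hfjz : f j ≠ z := by
        rw [hf, hz]
        intro e
        rw [Sigma.ext_iff] at e
        obtain ⟨-, e2⟩ := e
        rw [heq_iff_eq, Fin.ext_iff] at e2
        simp at e2
      refine ⟨z, by simp [hzC], Or.inl ?_⟩
      show (completeMultipartiteGraph fun i => Fin (a i)).dist (f j) (f i) +
        (completeMultipartiteGraph fun i => Fin (a i)).dist (f i) z =
        (completeMultipartiteGraph fun i => Fin (a i)).dist (f j) z
      rw [dist_eq_one (show (f j).1 ≠ (f i).1 from Ne.symm hij),
        dist_eq_one (show (f i).1 ≠ z.1 from hij),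
        dist_eq_two hk ha hfjz rfl]
    · have hj0 : j = i₀ := hj'.resolve_left h2
      have h2i : 2 ≤ a i := by
        rcases hi' with h | h
        · exact h
        · exact absurd (h.trans hj0.symm) hij
      set z : Σ i, Fin (a i) := ⟨i, ⟨1, h2i⟩⟩ with hz
      have hzC : z ∉ C := by
        intro hzmem
        obtain ⟨l, -, hl⟩ := Finset.mem_image.mp hzmem
        rw [hf, hz, Sigma.ext_iff] at hl
        obtain ⟨rfl, hl2⟩ := hl
        rw [heq_iff_eq, Fin.ext_iff] at hl2
        simp at hl2
      have hfiz : f i ≠ z := by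
        rw [hf, hz]
        intro e
        rw [Sigma.ext_iff] at e
        obtain ⟨-, e2⟩ := e
        rw [heq_iff_eq, Fin.ext_iff] at e2
        simp at e2
      refine ⟨z, by simp [hzC], Or.inr ?_⟩
      show (completeMultipartiteGraph fun i => Fin (a i)).dist (f i) (f j) +
        (completeMultipartiteGraph fun i => Fin (a i)).dist (f j) z =
        (completeMultipartiteGraph fun i => Fin (a i)).dist (f i) z
      rw [dist_eq_one (show (f i).1 ≠ (f j).1 from hij),
        dist_eq_one (show (f j).1 ≠ z.1 from Ne.symm hij),
        dist_eq_two hk ha hfiz rfl]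

end SdimCM

theorem sdim_completeMultipartite (k : ℕ) (hk : 2 ≤ k) (a : Fin k → ℕ)
    (ha : ∀ i, 1 ≤ a i) (hn : 3 ≤ ∑ i, a i) :
    sdim (completeMultipartiteGraph fun i => Fin (a i)) =
      (if (Finset.univ.filter fun i => a i = 1).card = 0
        then (∑ i, a i) - k
        else (∑ i, a i) - k + (Finset.univ.filter fun i => a i = 1).card - 1) := by
  classical
  have hcard : Fintype.card (Σ i, Fin (a i)) = ∑ i, a i := by simp
  have hkn : k ≤ ∑ i, a i := by
    calc k = ∑ _i : Fin k, 1 := by simp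
    _ ≤ ∑ i, a i := Finset.sum_le_sum fun i _ => ha i
  have hsk : (Finset.univ.filter fun i => a i = 1).card ≤ k := by
    have := Finset.card_filter_le (Finset.univ : Finset (Fin k)) (fun i => a i = 1)
    simpa using this
  obtain ⟨i₀, hi₀⟩ : ∃ i₀ : Fin k,
      (Finset.univ.filter fun i => a i = 1).card ≠ 0 → a i₀ = 1 := by
    by_cases hs : (Finset.univ.filter fun i => a i = 1).card = 0
    · exact ⟨⟨0, by omega⟩, fun h => absurd hs h⟩
    · obtain ⟨i, hi⟩ := Finset.card_pos.mp (Nat.pos_of_ne_zero hs)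
      exact ⟨i, fun _ => (Finset.mem_filter.mp hi).2⟩
  obtain ⟨S, hScard, hSres⟩ := SdimCM.upper hk ha i₀
  have hfP : (Finset.univ.filter fun i => 2 ≤ a i ∨ i = i₀).card =
      if (Finset.univ.filter fun i => a i = 1).card = 0 then k
      else k - (Finset.univ.filter fun i => a i = 1).card + 1 := by
    have hneg : (Finset.univ.filter fun i => 2 ≤ a i) =
        (Finset.univ.filter fun i => ¬ a i = 1) :=
      Finset.filter_congr (fun i _ => by have := ha i; constructor <;> omega)
    have hsplitU := Finset.card_filter_add_card_filter_not
      (s := (Finset.univ : Finset (Fin k))) (p := fun i => a i = 1)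
    have hkcard : (Finset.univ : Finset (Fin k)).card = k := by simp
    rw [hkcard] at hsplitU
    split_ifs with hs
    · have hemp : ∀ i : Fin k, ¬ a i = 1 := by
        intro i hi1
        have : i ∈ Finset.univ.filter fun i => a i = 1 :=
          Finset.mem_filter.mpr ⟨Finset.mem_univ i, hi1⟩
        rw [Finset.card_eq_zero.mp hs] at this
        exact absurd this (Finset.notMem_empty i)
      have : (Finset.univ.filter fun i => 2 ≤ a i ∨ i = i₀) = Finset.univ := by
        apply Finset.filter_true_of_mem
        intro i _
        left
        have := ha i; have := hemp i; omega
      rw [this]; simp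
    · have ha0 : a i₀ = 1 := hi₀ hs
      have hins : (Finset.univ.filter fun i => 2 ≤ a i ∨ i = i₀) =
          insert i₀ (Finset.univ.filter fun i => 2 ≤ a i) := by
        ext i
        simp only [Finset.mem_filter, Finset.mem_univ, true_and, Finset.mem_insert]
        tauto
      have hnotmem : i₀ ∉ Finset.univ.filter fun i => 2 ≤ a i := by
        simp [ha0]
      rw [hins, Finset.card_insert_of_notMem hnotmem, hneg]
      omega
  apply le_antisymm
  · apply Nat.sInf_le
    refine ⟨S, ?_, hSres⟩
    rw [hScard, hcard, hfP]
    split_ifs with hs <;> omega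
  · apply le_csInf
    · refine ⟨S.card, S, rfl, hSres⟩
    · rintro b ⟨T, rfl, hT⟩
      have := SdimCM.lower hk ha T hT
      rw [hcard] at this
      exact this
end

section
/- For m ≥ 2, the strong resolving graph of the odd cycle C_{2m+1} is C_{2m+1} itself: every pair of vertices at distance m in C_{2m+1} is mutually maximally distant, and these pairs form a (2m+1)-cycle. -/
open SimpleGraph

variable {V : Type*} {W : Type*}

namespace CycAux

variable {m : ℕ}

/-- forward distance from `i` to `j` around the cycle. -/
def df (i j : Fin (2*m+1)) : ℕ :=
  if i.val ≤ j.val then j.val - i.val else j.val + (2*m+1) - i.val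

/-- the next vertex. -/
def nxt (i : Fin (2*m+1)) : Fin (2*m+1) :=
  ⟨(i.val + 1) % (2*m+1), Nat.mod_lt _ (by omega)⟩

/-- the previous vertex. -/
def prv (i : Fin (2*m+1)) : Fin (2*m+1) :=
  ⟨(i.val + 2*m) % (2*m+1), Nat.mod_lt _ (by omega)⟩

lemma nxt_val (i : Fin (2*m+1)) :
    (nxt i).val = i.val + 1 ∨ (i.val = 2*m ∧ (nxt i).val = 0) := by
  have h := i.isLt
  rcases Nat.lt_or_ge (i.val + 1) (2*m+1) with h1 | h1
  · exact Or.inl (Nat.mod_eq_of_lt h1)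
  · right
    have : i.val = 2*m := by omega
    constructor
    · exact this
    · show (i.val + 1) % (2*m+1) = 0
      rw [this]; simp

lemma nxt_prv (i : Fin (2*m+1)) : nxt (prv i) = i := by
  apply Fin.ext
  show ((i.val + 2*m) % (2*m+1) + 1) % (2*m+1) = i.val
  rw [Nat.mod_add_mod]
  have : i.val + 2*m + 1 = i.val + (2*m+1) := by omega
  rw [this, Nat.add_mod_right, Nat.mod_eq_of_lt i.isLt]

lemma adj_nxt (hm : 1 ≤ m) (i : Fin (2*m+1)) : (cycGraph (2*m+1)).Adj i (nxt i) := by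
  refine ⟨?_, Or.inl rfl⟩
  intro h
  have h2 : i.val = (nxt i).val := congrArg Fin.val h
  have h3 := i.isLt
  rcases nxt_val i with h1 | ⟨h1, h1'⟩ <;> omega

lemma df_nxt {i j : Fin (2*m+1)} (hij : i ≠ j) : df (nxt i) j + 1 = df i j := by
  have hvij : i.val ≠ j.val := fun h => hij (Fin.ext h)
  have hi := i.isLt
  have hj := j.isLt
  rcases nxt_val i with h1 | ⟨h1, h1'⟩ <;>
    simp only [df] <;> split_ifs <;> omega

lemma df_eq_zero_iff {i j : Fin (2*m+1)} : df i j = 0 ↔ i = j := by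
  constructor
  · intro h
    have hi := i.isLt
    have hj := j.isLt
    apply Fin.ext
    simp only [df] at h
    split_ifs at h <;> omega
  · rintro rfl; simp [df]

lemma df_add {i j : Fin (2*m+1)} (hij : i ≠ j) : df i j + df j i = 2*m+1 := by
  have hvij : i.val ≠ j.val := fun h => hij (Fin.ext h)
  have hi := i.isLt
  have hj := j.isLt
  simp only [df]; split_ifs <;> omega

lemma walk_le (hm : 1 ≤ m) : ∀ (d : ℕ) (i j : Fin (2*m+1)), df i j ≤ d →
    ∃ p : (cycGraph (2*m+1)).Walk i j, p.length ≤ d := by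
  intro d
  induction d with
  | zero =>
    intro i j h
    have : i = j := df_eq_zero_iff.mp (by omega)
    subst this
    exact ⟨SimpleGraph.Walk.nil, by simp⟩
  | succ d ih =>
    intro i j h
    by_cases hij : i = j
    · subst hij; exact ⟨SimpleGraph.Walk.nil, by simp⟩
    · have hd : df (nxt i) j ≤ d := by have := df_nxt hij; omega
      obtain ⟨p, hp⟩ := ih (nxt i) j hd
      exact ⟨SimpleGraph.Walk.cons (adj_nxt hm i) p, by simp; omega⟩

lemma dist_le_df (hm : 1 ≤ m) (i j : Fin (2*m+1)) : (cycGraph (2*m+1)).dist i j ≤ df i j := by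
  obtain ⟨p, hp⟩ := walk_le hm (df i j) i j le_rfl
  exact le_trans (SimpleGraph.dist_le p) hp

lemma low {i j : Fin (2*m+1)} (p : (cycGraph (2*m+1)).Walk i j) :
    df i j ≤ p.length ∨ df j i ≤ p.length := by
  induction p with
  | nil => left; simp [df]
  | @cons i w j h q ih =>
    have hi := i.isLt
    have hw := w.isLt
    have hj := j.isLt
    have hadj : w.val = i.val + 1 ∨ (i.val = 2*m ∧ w.val = 0) ∨
        i.val = w.val + 1 ∨ (w.val = 2*m ∧ i.val = 0) := by
      rcases h.2 with h2 | h2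
      · rcases Nat.lt_or_ge (i.val + 1) (2*m+1) with h3 | h3
        · rw [Nat.mod_eq_of_lt h3] at h2; omega
        · have h4 : i.val = 2*m := by omega
          rw [h4] at h2; simp at h2; omega
      · rcases Nat.lt_or_ge (w.val + 1) (2*m+1) with h3 | h3
        · rw [Nat.mod_eq_of_lt h3] at h2; omega
        · have h4 : w.val = 2*m := by omega
          rw [h4] at h2; simp at h2; omega
    simp only [SimpleGraph.Walk.length_cons]
    simp only [df] at ih ⊢
    split_ifs at ih ⊢ <;> omega

lemma dist_eq (hm : 1 ≤ m) (i j : Fin (2*m+1)) :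
    (cycGraph (2*m+1)).dist i j = min (df i j) (df j i) := by
  apply le_antisymm
  · refine le_min (dist_le_df hm i j) ?_
    rw [SimpleGraph.dist_comm]
    exact dist_le_df hm j i
  · obtain ⟨p, hp⟩ := walk_le hm (df i j) i j le_rfl
    have hr : (cycGraph (2*m+1)).Reachable i j := ⟨p⟩
    obtain ⟨q, hq⟩ := hr.exists_walk_length_eq_dist
    rcases low q with h | h <;> rw [← hq] <;> omega

lemma diam (hm : 2 ≤ m) (i j : Fin (2*m+1)) : (cycGraph (2*m+1)).dist i j ≤ m := by
  rw [dist_eq (by omega)]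
  by_cases hij : i = j
  · subst hij; simp [df]
  · have := df_add hij; omega


lemma df_self (i : Fin (2*m+1)) : df i i = 0 := by simp [df]

lemma key (hm : 2 ≤ m) {u v : Fin (2*m+1)} (huv : u ≠ v)
    (hle : df u v ≤ df v u) (hlt : df u v < m) :
    ¬ MaxDistFrom (cycGraph (2*m+1)) u v := by
  intro hmax
  set w := prv u with hw
  have hnw : nxt w = u := nxt_prv u
  have hadj : (cycGraph (2*m+1)).Adj u w := by
    have h := adj_nxt (m := m) (by omega) w
    rw [hnw] at h
    exact h.symm
  have hsum := df_add huv
  have hδ : (cycGraph (2*m+1)).dist u v = df u v := by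
    rw [dist_eq (by omega)]; omega
  by_cases hwv : w = v
  · have h1 := df_nxt (m := m) (Ne.symm huv)
    have hnv : nxt v = u := hwv ▸ hnw
    rw [hnv, df_self] at h1
    omega
  · have hstep : df w v = df u v + 1 := by
      have h1 := df_nxt (m := m) hwv
      rw [hnw] at h1
      omega
    have hsum2 := df_add hwv
    have hdwv : (cycGraph (2*m+1)).dist w v = df u v + 1 := by
      rw [dist_eq (by omega)]; omega
    have h2 := hmax w hadj
    rw [hδ, hdwv] at h2
    omega

lemma claimA (hm : 2 ≤ m) (u v : Fin (2*m+1)) :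
    (srGraph (cycGraph (2*m+1))).Adj u v ↔ (cycGraph (2*m+1)).dist u v = m := by
  constructor
  · rintro ⟨hne, h1, h2⟩
    by_contra hne'
    have hlt : (cycGraph (2*m+1)).dist u v < m :=
      lt_of_le_of_ne (diam hm u v) hne'
    have hsum := df_add hne
    rw [dist_eq (by omega)] at hlt
    rcases le_total (df u v) (df v u) with h | h
    · exact key hm hne h (by omega) h1
    · have h2' : MaxDistFrom (cycGraph (2*m+1)) v u := h2
      refine key hm (Ne.symm hne) h (by omega) h2'
  · intro hd
    have hne : u ≠ v := by
      intro h; subst h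
      rw [SimpleGraph.dist_self] at hd
      omega
    refine ⟨hne, fun w _ => ?_, fun w _ => ?_⟩
    · rw [hd]; exact diam hm w v
    · rw [show (cycGraph (2*m+1)).dist v u = m from SimpleGraph.dist_comm.trans hd]
      exact diam hm w u

lemma distm (hm : 2 ≤ m) (u v : Fin (2*m+1)) :
    (cycGraph (2*m+1)).dist u v = m ↔ (df u v = m ∨ df v u = m) := by
  rw [dist_eq (by omega)]
  by_cases hij : u = v
  · subst hij; rw [df_self]; omega
  · have := df_add hij; omega

lemma df_eq_m_iff (hm : 2 ≤ m) (u v : Fin (2*m+1)) :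
    df u v = m ↔ v.val = (u.val + m) % (2*m+1) := by
  have hu := u.isLt
  have hv := v.isLt
  have hmod : ((u.val+m) % (2*m+1) = u.val+m ∧ u.val+m < 2*m+1) ∨
      ((u.val+m) % (2*m+1) = u.val+m-(2*m+1) ∧ 2*m+1 ≤ u.val+m) := by
    rcases Nat.lt_or_ge (u.val+m) (2*m+1) with h | h
    · exact Or.inl ⟨Nat.mod_eq_of_lt h, h⟩
    · refine Or.inr ⟨?_, h⟩
      rw [Nat.mod_eq_sub_mod h, Nat.mod_eq_of_lt (by omega)]
  simp only [df]; split_ifs <;> omega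

def phi (m : ℕ) (x : Fin (2*m+1)) : Fin (2*m+1) :=
  ⟨(x.val * (2*m-1)) % (2*m+1), Nat.mod_lt _ (by omega)⟩

def psi (m : ℕ) (y : Fin (2*m+1)) : Fin (2*m+1) :=
  ⟨(y.val * m) % (2*m+1), Nat.mod_lt _ (by omega)⟩

lemma crux (hm : 2 ≤ m) : (2*m-1) * m = (m-1) * (2*m+1) + 1 := by
  obtain ⟨a, rfl⟩ : ∃ a, m = a + 2 := ⟨m-2, by omega⟩
  have h1 : 2*(a+2)-1 = 2*a+3 := by omega
  have h2 : (a+2)-1 = a+1 := by omega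
  rw [h1, h2]; ring

lemma psi_phi (hm : 2 ≤ m) : Function.LeftInverse (psi m) (phi m) := by
  intro x
  apply Fin.ext
  show (x.val * (2*m-1)) % (2*m+1) * m % (2*m+1) = x.val
  rw [Nat.mod_mul_mod, mul_assoc, crux hm]
  have h : x.val * ((m-1)*(2*m+1) + 1) = x.val + x.val*(m-1)*(2*m+1) := by ring
  rw [h, Nat.add_mul_mod_self_right, Nat.mod_eq_of_lt x.isLt]

lemma phi_psi (hm : 2 ≤ m) : Function.RightInverse (psi m) (phi m) := by
  intro y
  apply Fin.ext
  show (y.val * m) % (2*m+1) * (2*m-1) % (2*m+1) = y.val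
  rw [Nat.mod_mul_mod, mul_assoc, mul_comm m (2*m-1), crux hm]
  have h : y.val * ((m-1)*(2*m+1) + 1) = y.val + y.val*(m-1)*(2*m+1) := by ring
  rw [h, Nat.add_mul_mod_self_right, Nat.mod_eq_of_lt y.isLt]

def phiEquiv (hm : 2 ≤ m) : Fin (2*m+1) ≃ Fin (2*m+1) :=
  ⟨phi m, psi m, psi_phi hm, phi_psi hm⟩

lemma A1 (hm : 2 ≤ m) (u v : Fin (2*m+1)) :
    ((phi m u).val + 1) % (2*m+1) = (phi m v).val ↔ v.val = (u.val + m) % (2*m+1) := by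
  have hkey : ∀ w : Fin (2*m+1), w.val = (u.val + m) % (2*m+1) →
      ((phi m u).val + 1) % (2*m+1) = (phi m w).val := by
    intro w hw
    show ((u.val * (2*m-1)) % (2*m+1) + 1) % (2*m+1) = (w.val * (2*m-1)) % (2*m+1)
    rw [hw, Nat.mod_mul_mod]
    have h : (u.val + m) * (2*m-1) = u.val*(2*m-1) + 1 + (m-1)*(2*m+1) := by
      rw [add_mul, mul_comm m (2*m-1), crux hm]; ring
    rw [h, Nat.add_mul_mod_self_right, Nat.mod_add_mod]
  constructor
  · intro h
    set v' : Fin (2*m+1) := ⟨(u.val + m) % (2*m+1), Nat.mod_lt _ (by omega)⟩ with hv'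
    have h2 := hkey v' rfl
    have h3 : phi m v = phi m v' := Fin.ext (by rw [← h, h2])
    have h4 : v = v' := (psi_phi hm).injective h3
    rw [h4]
  · exact hkey v

def theIso (hm : 2 ≤ m) :
    srGraph (cycGraph (2*m+1)) ≃g cycGraph (2*m+1) where
  toEquiv := phiEquiv hm
  map_rel_iff' := by
    intro u v
    show (cycGraph (2*m+1)).Adj (phi m u) (phi m v) ↔ _
    rw [claimA hm u v, distm hm u v]
    constructor
    · rintro ⟨hne, h | h⟩
      · exact Or.inl ((df_eq_m_iff hm u v).mpr ((A1 hm u v).mp h))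
      · exact Or.inr ((df_eq_m_iff hm v u).mpr ((A1 hm v u).mp h))
    · intro h
      have hne : u ≠ v := by
        rintro rfl
        rw [df_self] at h
        omega
      refine ⟨fun hc => hne ((psi_phi hm).injective hc), ?_⟩
      rcases h with h | h
      · exact Or.inl ((A1 hm u v).mpr ((df_eq_m_iff hm u v).mp h))
      · exact Or.inr ((A1 hm v u).mpr ((df_eq_m_iff hm v u).mp h))

end CycAux

theorem srGraph_odd_cycle (m : ℕ) (hm : 2 ≤ m) :
    (∀ u v : Fin (2 * m + 1), (srGraph (cycGraph (2 * m + 1))).Adj u v ↔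
      (cycGraph (2 * m + 1)).dist u v = m) ∧
    Nonempty (srGraph (cycGraph (2 * m + 1)) ≃g cycGraph (2 * m + 1)) := by
  exact ⟨CycAux.claimA hm, ⟨CycAux.theIso hm⟩⟩
end

section
/- If G and H are connected graphs each of order at least two, then the strong resolving graph of the Cartesian product satisfies (G □ H)_SR = G_SR × H_SR, the direct (tensor) product of the strong resolving graphs. -/
open SimpleGraph

variable {V : Type*} {W : Type*}

/-- The direct (tensor) product of two graphs. -/
def directProd (G : SimpleGraph V) (H : SimpleGraph W) : SimpleGraph (V × W) where
  Adj x y := G.Adj x.1 y.1 ∧ H.Adj x.2 y.2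
  symm := by constructor; rintro x y ⟨h1, h2⟩; exact ⟨h1.symm, h2.symm⟩
  loopless := by constructor; rintro x ⟨h1, -⟩; exact G.loopless.irrefl _ h1

lemma boxProd_walk_le {G : SimpleGraph V} {H : SimpleGraph W}
    (hG : G.Connected) (hH : H.Connected) {x y : V × W} (p : (G □ H).Walk x y) :
    G.dist x.1 y.1 + H.dist x.2 y.2 ≤ p.length := by
  induction p with
  | nil => simp
  | @cons x z y h q ih =>
    rw [SimpleGraph.Walk.length_cons]
    rcases SimpleGraph.boxProd_adj.mp h with ⟨ha, he⟩ | ⟨ha, he⟩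
    · calc G.dist x.1 y.1 + H.dist x.2 y.2
          ≤ (G.dist x.1 z.1 + G.dist z.1 y.1) + H.dist x.2 y.2 := by
            exact Nat.add_le_add_right (hG.dist_triangle) _
        _ ≤ (1 + G.dist z.1 y.1) + H.dist z.2 y.2 := by
            rw [← he]
            exact Nat.add_le_add_right (Nat.add_le_add_right
              (SimpleGraph.dist_le ha.toWalk) _) _
        _ = (G.dist z.1 y.1 + H.dist z.2 y.2) + 1 := by ring
        _ ≤ q.length + 1 := Nat.add_le_add_right ih 1
    · calc G.dist x.1 y.1 + H.dist x.2 y.2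
          ≤ G.dist x.1 y.1 + (H.dist x.2 z.2 + H.dist z.2 y.2) := by
            exact Nat.add_le_add_left (hH.dist_triangle) _
        _ ≤ G.dist z.1 y.1 + (1 + H.dist z.2 y.2) := by
            rw [← he]
            exact Nat.add_le_add_left (Nat.add_le_add_right
              (SimpleGraph.dist_le ha.toWalk) _) _
        _ = (G.dist z.1 y.1 + H.dist z.2 y.2) + 1 := by ring
        _ ≤ q.length + 1 := Nat.add_le_add_right ih 1

lemma boxProd_dist {G : SimpleGraph V} {H : SimpleGraph W}
    (hG : G.Connected) (hH : H.Connected) (a c : V) (b d : W) :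
    (G □ H).dist (a, b) (c, d) = G.dist a c + H.dist b d := by
  apply le_antisymm
  · obtain ⟨p, hp⟩ := hG.exists_walk_length_eq_dist a c
    obtain ⟨q, hq⟩ := hH.exists_walk_length_eq_dist b d
    have := SimpleGraph.dist_le ((p.boxProdLeft H b).append (q.boxProdRight G c))
    rw [SimpleGraph.Walk.length_append] at this
    have e1 : (p.boxProdLeft H b).length = p.length := SimpleGraph.Walk.length_map _ _
    have e2 : (q.boxProdRight G c).length = q.length := SimpleGraph.Walk.length_map _ _
    rwa [e1, e2, hp, hq] at this
  · obtain ⟨p, hp⟩ := (hG.boxProd hH).exists_walk_length_eq_dist (a, b) (c, d)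
    have := boxProd_walk_le hG hH p
    rw [hp] at this
    exact this

lemma maxDistFrom_boxProd {G : SimpleGraph V} {H : SimpleGraph W}
    (hG : G.Connected) (hH : H.Connected) (a c : V) (b d : W) :
    MaxDistFrom (G □ H) (a, b) (c, d) ↔ MaxDistFrom G a c ∧ MaxDistFrom H b d := by
  constructor
  · intro h
    constructor
    · intro w hw
      have := h (w, b) (SimpleGraph.boxProd_adj_left.mpr hw)
      rw [boxProd_dist hG hH, boxProd_dist hG hH] at this
      exact Nat.le_of_add_le_add_right this
    · intro w hw
      have := h (a, w) (SimpleGraph.boxProd_adj_right.mpr hw)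
      rw [boxProd_dist hG hH, boxProd_dist hG hH] at this
      exact Nat.le_of_add_le_add_left this
  · rintro ⟨h1, h2⟩ ⟨w1, w2⟩ hw
    rcases SimpleGraph.boxProd_adj.mp hw with ⟨ha, he⟩ | ⟨ha, he⟩ <;>
      simp only [] at ha he <;> cases he <;>
      rw [boxProd_dist hG hH, boxProd_dist hG hH]
    · exact Nat.add_le_add_right (h1 w1 ha) _
    · exact Nat.add_le_add_left (h2 w2 ha) _

lemma exists_adj_of_connected [Fintype V] {G : SimpleGraph V} (hG : G.Connected)
    (hV : 2 ≤ Fintype.card V) (a : V) : ∃ w, G.Adj a w := by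
  obtain ⟨b, hb⟩ := Fintype.exists_ne_of_one_lt_card hV a
  obtain ⟨p⟩ := hG a b
  cases p with
  | nil => exact absurd rfl hb.symm
  | cons h q => exact ⟨_, h⟩

lemma not_maxDistFrom_self [Fintype V] {G : SimpleGraph V} (hG : G.Connected)
    (hV : 2 ≤ Fintype.card V) (a : V) : ¬ MaxDistFrom G a a := by
  intro h
  obtain ⟨w, hw⟩ := exists_adj_of_connected hG hV a
  have := h w hw
  rw [SimpleGraph.dist_self] at this
  have := (hG.dist_eq_zero_iff).mp (Nat.le_zero.mp this)
  exact G.ne_of_adj hw this.symm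

theorem srGraph_boxProd [Fintype V] [Fintype W] (G : SimpleGraph V)
    (H : SimpleGraph W) (hG : G.Connected) (hH : H.Connected)
    (hV : 2 ≤ Fintype.card V) (hW : 2 ≤ Fintype.card W) :
    srGraph (G □ H) = directProd (srGraph G) (srGraph H) := by
  ext ⟨a, b⟩ ⟨c, d⟩
  show ((a, b) ≠ (c, d) ∧ MutMaxDist (G □ H) (a, b) (c, d)) ↔
    (a ≠ c ∧ MutMaxDist G a c) ∧ (b ≠ d ∧ MutMaxDist H b d)
  constructor
  · rintro ⟨hne, h1, h2⟩
    rw [maxDistFrom_boxProd hG hH] at h1 h2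
    have hac : a ≠ c := by
      rintro rfl
      exact not_maxDistFrom_self hG hV a h1.1
    have hbd : b ≠ d := by
      rintro rfl
      exact not_maxDistFrom_self hH hW b h1.2
    exact ⟨⟨hac, h1.1, h2.1⟩, ⟨hbd, h1.2, h2.2⟩⟩
  · rintro ⟨⟨hac, hg1, hg2⟩, ⟨hbd, hh1, hh2⟩⟩
    refine ⟨by simp [hac], ?_, ?_⟩ <;>
      rw [maxDistFrom_boxProd hG hH] <;> exact ⟨by assumption, by assumption⟩
end

section
/- The modular product G ⋄ H of two graphs of order at least two contains no pair of distinct non-adjacent twins. -/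
open SimpleGraph

variable {V : Type*} {W : Type*}

/-- The modular product of two graphs:
`E(G ⋄ H) = E(G □ H) ∪ E(G × H) ∪ E(Ḡ × H̄)`. -/
def modProd (G : SimpleGraph V) (H : SimpleGraph W) : SimpleGraph (V × W) :=
  (G □ H) ⊔ directProd G H ⊔ directProd Gᶜ Hᶜ


lemma modProd_adj {G : SimpleGraph V} {H : SimpleGraph W} {x y : V × W} :
    (modProd G H).Adj x y ↔
      ((G.Adj x.1 y.1 ∧ x.2 = y.2) ∨ (H.Adj x.2 y.2 ∧ x.1 = y.1)) ∨
      (G.Adj x.1 y.1 ∧ H.Adj x.2 y.2) ∨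
      ((x.1 ≠ y.1 ∧ ¬ G.Adj x.1 y.1) ∧ (x.2 ≠ y.2 ∧ ¬ H.Adj x.2 y.2)) := by
  simp only [modProd, directProd, SimpleGraph.boxProd_adj, SimpleGraph.compl_adj,
    SimpleGraph.sup_adj]
  tauto

theorem modProd_no_nonadjacent_twins [Fintype V] [Fintype W]
    (G : SimpleGraph V) (H : SimpleGraph W)
    (hV : 2 ≤ Fintype.card V) (hW : 2 ≤ Fintype.card W) :
    ∀ x y : V × W, x ≠ y → ¬ (modProd G H).Adj x y →
      (modProd G H).neighborSet x ≠ (modProd G H).neighborSet y := by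
  rintro ⟨a, b⟩ ⟨c, d⟩ hne hnadj heq
  have key : ∀ z : V × W, (modProd G H).Adj (a, b) z ↔ (modProd G H).Adj (c, d) z := by
    intro z
    rw [← SimpleGraph.mem_neighborSet, ← SimpleGraph.mem_neighborSet, heq]
  simp only [modProd_adj] at hnadj key
  by_cases hac : a = c
  · subst hac
    have hbd : b ≠ d := fun h => hne (by rw [h])
    have hH : ¬ H.Adj b d := fun h => hnadj (Or.inl (Or.inr ⟨h, rfl⟩))
    obtain ⟨a', ha'⟩ := Fintype.exists_ne_of_one_lt_card (by omega) a
    have ha'' : a ≠ a' := Ne.symm ha'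
    by_cases hG : G.Adj a a'
    · have h1 := (key (a', d)).mpr (Or.inl (Or.inl ⟨hG, rfl⟩))
      clear key heq hnadj hne
      simp only at h1
      tauto
    · have h1 := (key (a', b)).mpr
        (Or.inr (Or.inr ⟨⟨ha'', hG⟩,
          ⟨fun h => hbd h.symm, fun h => hH (H.adj_symm h)⟩⟩))
      clear key heq hnadj hne
      have hHb : ¬ H.Adj b b := H.loopless.irrefl b
      have hbb : ¬ (b ≠ b) := fun h => h rfl
      simp only at h1
      tauto
  · by_cases hbd : b = d
    · subst hbd
      have hG : ¬ G.Adj a c := fun h => hnadj (Or.inl (Or.inl ⟨h, rfl⟩))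
      obtain ⟨b', hb'⟩ := Fintype.exists_ne_of_one_lt_card (by omega) b
      have hb'' : b ≠ b' := Ne.symm hb'
      by_cases hH : H.Adj b b'
      · have h1 := (key (c, b')).mpr (Or.inl (Or.inr ⟨hH, rfl⟩))
        clear key heq hnadj hne
        simp only at h1
        tauto
      · have h1 := (key (c, b')).mp
          (Or.inr (Or.inr ⟨⟨hac, hG⟩, ⟨hb'', hH⟩⟩))
        clear key heq hnadj hne
        have hGc : ¬ G.Adj c c := G.loopless.irrefl c
        have hcc : ¬ (c ≠ c) := fun h => h rfl
        simp only at h1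
        tauto
    · by_cases hG : G.Adj a c
      · have hH : ¬ H.Adj b d := fun h => hnadj (Or.inr (Or.inl ⟨hG, h⟩))
        have h1 := (key (c, b)).mp (Or.inl (Or.inl ⟨hG, rfl⟩))
        clear key heq hnadj hne
        have hGc : ¬ G.Adj c c := G.loopless.irrefl c
        have hcc : ¬ (c ≠ c) := fun h => h rfl
        have hH' : ¬ H.Adj d b := fun h => hH (H.adj_symm h)
        simp only at h1
        tauto
      · have hH : H.Adj b d := by
          by_contra hh
          exact hnadj (Or.inr (Or.inr ⟨⟨hac, hG⟩, ⟨hbd, hh⟩⟩))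
        have h1 := (key (a, d)).mp (Or.inl (Or.inr ⟨hH, rfl⟩))
        clear key heq hnadj hne
        have hG' : ¬ G.Adj c a := fun h => hG (G.adj_symm h)
        have hHd : ¬ H.Adj d d := H.loopless.irrefl d
        have hdd : ¬ (d ≠ d) := fun h => h rfl
        simp only at h1
        tauto
end
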